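/- The inclusions =ˢ ⊆ = ⊆ =ʷ hold among the strong equality, the absolute equality, and the weak equality on π-processes, and both inclusions are strict. -/

import Mathlib

set_option linter.unusedVariables false

/-! Core formalization of the π-calculus with name dichotomy.
Names are natural numbers; name variables are natural numbers (kept disjoint
via the sum-like type `NV`). -/

abbrev Name := ℕ

/-- Names and name variables. -/
inductive NV : Type
  | nm : Name → NV
  | vr : ℕ → NV
  deriving DecidableEq

/-- π-terms.  Input and output choices have a finite index set `Fin k`. -/
inductive Term : Type
  | nil : Term
  | inp : NV → ℕ → (k : ℕ) → (Fin k → Term) → Term          -- Σ_{i∈I} n(x).T_i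
  | out : NV → (k : ℕ) → (Fin k → NV) → (Fin k → Term) → Term -- Σ_{i∈I} n̄ m_i.T_i
  | par : Term → Term → Term
  | res : Name → Term → Term
  | mat : NV → NV → Term → Term
  | mis : NV → NV → Term → Term
  | repInp : NV → ℕ → Term → Term                             -- !n(x).T
  | repOut : NV → NV → Term → Term                            -- !n̄m.T

namespace NV

/-- Apply a map on variables. -/
def sub (σ : ℕ → NV) : NV → NV
  | nm a => nm a
  | vr x => σ x

/-- Apply a map on names. -/
def ren (α : Name → Name) : NV → NV
  | nm a => nm (α a)
  | vr x => vr x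

def vars : NV → Set ℕ
  | nm _ => ∅
  | vr x => {x}

def names : NV → Set Name
  | nm a => {a}
  | vr _ => ∅

end NV

namespace Term

/-- Apply a substitution (a map from name variables to names-or-variables),
    not substituting bound occurrences. -/
def applyVar (σ : ℕ → NV) : Term → Term
  | nil => nil
  | inp n x k Ts => inp (n.sub σ) x k (fun i => (Ts i).applyVar (Function.update σ x (NV.vr x)))
  | out n k ms Ts => out (n.sub σ) k (fun i => (ms i).sub σ) (fun i => (Ts i).applyVar σ)
  | par S T => par (S.applyVar σ) (T.applyVar σ)
  | res c T => res c (T.applyVar σ)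
  | mat p q T => mat (p.sub σ) (q.sub σ) (T.applyVar σ)
  | mis p q T => mis (p.sub σ) (q.sub σ) (T.applyVar σ)
  | repInp n x T => repInp (n.sub σ) x (T.applyVar (Function.update σ x (NV.vr x)))
  | repOut n m T => repOut (n.sub σ) (m.sub σ) (T.applyVar σ)

/-- Substitute the single name `c` for the name variable `x`: `T{c/x}`. -/
def subst1 (x : ℕ) (c : Name) (T : Term) : Term :=
  T.applyVar (fun y => if y = x then NV.nm c else NV.vr y)

/-- Apply an assignment (a total map from name variables to names). -/
def assign (ρ : ℕ → Name) (T : Term) : Term :=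
  T.applyVar (fun x => NV.nm (ρ x))

/-- Apply a renaming to all names of a term. -/
def applyName (α : Name → Name) : Term → Term
  | nil => nil
  | inp n x k Ts => inp (n.ren α) x k (fun i => (Ts i).applyName α)
  | out n k ms Ts => out (n.ren α) k (fun i => (ms i).ren α) (fun i => (Ts i).applyName α)
  | par S T => par (S.applyName α) (T.applyName α)
  | res c T => res (α c) (T.applyName α)
  | mat p q T => mat (p.ren α) (q.ren α) (T.applyName α)
  | mis p q T => mis (p.ren α) (q.ren α) (T.applyName α)
  | repInp n x T => repInp (n.ren α) x (T.applyName α)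
  | repOut n m T => repOut (n.ren α) (m.ren α) (T.applyName α)

/-- Free name variables. -/
def fvar : Term → Set ℕ
  | nil => ∅
  | inp n x k Ts => n.vars ∪ ((⋃ i, (Ts i).fvar) \ {x})
  | out n k ms Ts => n.vars ∪ (⋃ i, (ms i).vars ∪ (Ts i).fvar)
  | par S T => S.fvar ∪ T.fvar
  | res _ T => T.fvar
  | mat p q T => p.vars ∪ q.vars ∪ T.fvar
  | mis p q T => p.vars ∪ q.vars ∪ T.fvar
  | repInp n x T => n.vars ∪ (T.fvar \ {x})
  | repOut n m T => n.vars ∪ m.vars ∪ T.fvar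

/-- Global (non-local) names. -/
def gname : Term → Set Name
  | nil => ∅
  | inp n _ k Ts => n.names ∪ (⋃ i, (Ts i).gname)
  | out n k ms Ts => n.names ∪ (⋃ i, (ms i).names ∪ (Ts i).gname)
  | par S T => S.gname ∪ T.gname
  | res c T => T.gname \ {c}
  | mat p q T => p.names ∪ q.names ∪ T.gname
  | mis p q T => p.names ∪ q.names ∪ T.gname
  | repInp n _ T => n.names ∪ T.gname
  | repOut n m T => n.names ∪ m.names ∪ T.gname

end Term

/-- A π-process is a closed π-term. -/
def Closed (P : Term) : Prop := P.fvar = ∅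

def IsProc (P : Term) : Prop := Closed P

/-- Labels (external actions). -/
inductive Label : Type
  | inp : Name → Name → Label      -- ab
  | out : Name → Name → Label      -- āb
  | bout : Name → Name → Label     -- ā(c)
  deriving DecidableEq

def Label.names : Label → Set Name
  | .inp a b => {a, b}
  | .out a b => {a, b}
  | .bout a c => {a, c}

def Label.ren (α : Name → Name) : Label → Label
  | .inp a b => .inp (α a) (α b)
  | .out a b => .out (α a) (α b)
  | .bout a c => .bout (α a) (α c)

/-- Actions: internal action τ or a label. -/
inductive Act : Type
  | tau : Act
  | lab : Label → Act

def Act.names : Act → Set Name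
  | .tau => ∅
  | .lab ℓ => ℓ.names

def Act.ren (α : Name → Name) : Act → Act
  | .tau => .tau
  | .lab ℓ => .lab (ℓ.ren α)

/-- The labelled transition system of the π-calculus. -/
inductive Step : Term → Act → Term → Prop
  | inp {a : Name} {x : ℕ} {k : ℕ} {Ts : Fin k → Term} (i : Fin k) (c : Name) :
      Step (.inp (.nm a) x k Ts) (.lab (.inp a c)) ((Ts i).subst1 x c)
  | out {a : Name} {k : ℕ} {ms : Fin k → NV} {Ts : Fin k → Term} (i : Fin k) {c : Name}
      (h : ms i = .nm c) :
      Step (.out (.nm a) k ms Ts) (.lab (.out a c)) (Ts i)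
  | parR {S T T' : Term} {μ : Act} :
      Step T μ T' → Step (.par S T) μ (.par S T')
  | parL {S S' T : Term} {μ : Act} :
      Step S μ S' → Step (.par S T) μ (.par S' T)
  | commL {S S' T T' : Term} {a b : Name} :
      Step S (.lab (.inp a b)) S' → Step T (.lab (.out a b)) T' →
      Step (.par S T) .tau (.par S' T')
  | commR {S S' T T' : Term} {a b : Name} :
      Step S (.lab (.out a b)) S' → Step T (.lab (.inp a b)) T' →
      Step (.par S T) .tau (.par S' T')
  | closeL {S S' T T' : Term} {a c : Name} :
      Step S (.lab (.inp a c)) S' → Step T (.lab (.bout a c)) T' →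
      Step (.par S T) .tau (.res c (.par S' T'))
  | closeR {S S' T T' : Term} {a c : Name} :
      Step S (.lab (.bout a c)) S' → Step T (.lab (.inp a c)) T' →
      Step (.par S T) .tau (.res c (.par S' T'))
  | open_ {T T' : Term} {a c : Name} :
      Step T (.lab (.out a c)) T' → Step (.res c T) (.lab (.bout a c)) T'
  | resStep {T T' : Term} {μ : Act} {c : Name} :
      Step T μ T' → c ∉ μ.names → Step (.res c T) μ (.res c T')
  | matStep {T T' : Term} {μ : Act} {a : Name} :
      Step T μ T' → Step (.mat (.nm a) (.nm a) T) μ T'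
  | misStep {T T' : Term} {μ : Act} {a b : Name} :
      a ≠ b → Step T μ T' → Step (.mis (.nm a) (.nm b) T) μ T'
  | repOutStep {a b : Name} {T : Term} :
      Step (.repOut (.nm a) (.nm b) T) (.lab (.out a b)) (.par T (.repOut (.nm a) (.nm b) T))
  | repInpStep {a : Name} {x : ℕ} {T : Term} (b : Name) :
      Step (.repInp (.nm a) x T) (.lab (.inp a b)) (.par (T.subst1 x b) (.repInp (.nm a) x T))

/-- Internal action. -/
def Tau (P Q : Term) : Prop := Step P .tau Q

/-- `P ⟹ Q` : reflexive and transitive closure of τ. -/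
def WeakTau : Term → Term → Prop := Relation.ReflTransGen Tau

/-- `P ⇓` : observability. -/
def Obs (P : Term) : Prop := ∃ P' ℓ P'', WeakTau P P' ∧ Step P' (.lab ℓ) P''

abbrev PRel : Type := Term → Term → Prop

def OnProc (R : PRel) : Prop := ∀ P Q, R P Q → IsProc P ∧ IsProc Q

def ReflProc (R : PRel) : Prop := ∀ P, IsProc P → R P P

def Equipollent (R : PRel) : Prop := ∀ P Q, R P Q → (Obs P ↔ Obs Q)

def Extensional (R : PRel) : Prop :=
  (∀ L M P Q, R L M → R P Q → R (.par L P) (.par M Q)) ∧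
  (∀ P Q c, R P Q → R (.res c P) (.res c Q))

/-- An infinite τ-sequence. -/
def TauSeq (f : ℕ → Term) : Prop := ∀ n, Tau (f n) (f (n + 1))

/-- `P —τ→⟹ P'`. -/
def TauWeak (P P' : Term) : Prop := ∃ P₀, Tau P P₀ ∧ WeakTau P₀ P'

def Codivergent (R : PRel) : Prop := ∀ P Q, R P Q →
  ((∀ f : ℕ → Term, f 0 = Q → TauSeq f →
      ∃ k, 1 ≤ k ∧ ∃ P', TauWeak P P' ∧ R P' (f k)) ∧
   (∀ f : ℕ → Term, f 0 = P → TauSeq f →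
      ∃ k, 1 ≤ k ∧ ∃ Q', TauWeak Q Q' ∧ R Q' (f k)))

/-- Branching-style bisimulation. -/
def Bisim (R : PRel) : Prop := ∀ P Q, R P Q →
  ((∀ Q', Tau Q Q' →
      (∃ P', WeakTau P P' ∧ R P' Q ∧ R P' Q') ∨
      (∃ P'' P', WeakTau P P'' ∧ R P'' Q ∧ Tau P'' P' ∧ R P' Q')) ∧
   (∀ P', Tau P P' →
      (∃ Q', WeakTau Q Q' ∧ R P Q' ∧ R P' Q') ∨
      (∃ Q'' Q', WeakTau Q Q'' ∧ R P Q'' ∧ Tau Q'' Q' ∧ R P' Q')))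

/-- A relation qualifying for the absolute equality. -/
def GoodAbs (R : PRel) : Prop :=
  OnProc R ∧ ReflProc R ∧ Equipollent R ∧ Extensional R ∧ Codivergent R ∧ Bisim R

/-- The absolute equality: the largest reflexive, equipollent, extensional,
codivergent bisimulation on π-processes. -/
def AbsEq (P Q : Term) : Prop := ∃ R : PRel, GoodAbs R ∧ R P Q

/-- Weak bisimulation (Milner style). -/
def WeakBisim (R : PRel) : Prop := ∀ P Q, R P Q →
  ((∀ Q', Tau Q Q' → ∃ P', WeakTau P P' ∧ R P' Q') ∧
   (∀ P', Tau P P' → ∃ Q', WeakTau Q Q' ∧ R P' Q'))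

/-- Strong bisimulation. -/
def StrongBisim (R : PRel) : Prop :=
  (∀ P Q, R P Q → R Q P) ∧
  (∀ P Q Q', R P Q → Tau Q Q' → ∃ P', Tau P P' ∧ R P' Q')

def GoodStrong (R : PRel) : Prop :=
  OnProc R ∧ ReflProc R ∧ Equipollent R ∧ Extensional R ∧ StrongBisim R

/-- The strong equality =ˢ : the largest reflexive, equipollent, extensional
strong bisimulation on π-processes. -/
def StrongEq (P Q : Term) : Prop := ∃ R : PRel, GoodStrong R ∧ R P Q

def GoodWeak (R : PRel) : Prop :=
  OnProc R ∧ ReflProc R ∧ Equipollent R ∧ Extensional R ∧ Codivergent R ∧ WeakBisim R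

/-- The weak equality =ʷ : the largest reflexive, equipollent, extensional,
codivergent weak bisimulation on π-processes. -/
def WeakEq (P Q : Term) : Prop := ∃ R : PRel, GoodWeak R ∧ R P Q

/-! ### Section A: inclusions =ˢ ⊆ = ⊆ =ʷ -/

theorem weakTau_refl (P : Term) : WeakTau P P := Relation.ReflTransGen.refl

theorem weakTau_single {P Q : Term} (h : Tau P Q) : WeakTau P Q :=
  Relation.ReflTransGen.single h

theorem weakTau_trans {P Q R : Term} (h1 : WeakTau P Q) (h2 : WeakTau Q R) : WeakTau P R :=
  Relation.ReflTransGen.trans h1 h2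

theorem weakTau_head {P Q R : Term} (h1 : Tau P Q) (h2 : WeakTau Q R) : WeakTau P R :=
  Relation.ReflTransGen.head h1 h2

theorem weakTau_tail {P Q R : Term} (h1 : WeakTau P Q) (h2 : Tau Q R) : WeakTau P R :=
  Relation.ReflTransGen.tail h1 h2

theorem tauWeak_of_weakTau_tau {P Q R : Term} (h1 : WeakTau P Q) (h2 : Tau Q R) :
    TauWeak P R := by
  rcases (Relation.ReflTransGen.cases_head h1) with rfl | ⟨P₀, hP₀, hW⟩
  · exact ⟨R, h2, weakTau_refl R⟩
  · exact ⟨P₀, hP₀, weakTau_tail hW h2⟩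

theorem tauWeak_to_weakTau {P Q : Term} (h : TauWeak P Q) : WeakTau P Q := by
  obtain ⟨P₀, h1, h2⟩ := h; exact weakTau_head h1 h2

theorem strongEq_to_absEq {P Q : Term} (h : StrongEq P Q) : AbsEq P Q := by
  obtain ⟨R, ⟨hop, hrefl, heq, hext, hsym, hstep⟩, hR⟩ := h
  refine ⟨R, ⟨hop, hrefl, heq, hext, ?_, ?_⟩, hR⟩
  · intro P Q hPQ
    constructor
    · intro f hf0 hfs
      obtain ⟨P', hτ, hR'⟩ := hstep P Q (f 1) hPQ (hf0 ▸ hfs 0)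
      exact ⟨1, le_refl 1, P', ⟨P', hτ, weakTau_refl _⟩, hR'⟩
    · intro f hf0 hfs
      obtain ⟨Q', hτ, hR'⟩ := hstep Q P (f 1) (hsym _ _ hPQ) (hf0 ▸ hfs 0)
      exact ⟨1, le_refl 1, Q', ⟨Q', hτ, weakTau_refl _⟩, hR'⟩
  · intro P Q hPQ
    constructor
    · intro Q' hQ'
      obtain ⟨P', hτ, hR'⟩ := hstep P Q Q' hPQ hQ'
      exact Or.inr ⟨P, P', weakTau_refl _, hPQ, hτ, hR'⟩
    · intro P' hP'
      obtain ⟨Q', hτ, hR'⟩ := hstep Q P P' (hsym _ _ hPQ) hP'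
      exact Or.inr ⟨Q, Q', weakTau_refl _, hPQ, hτ, hsym _ _ hR'⟩

theorem absEq_to_weakEq {P Q : Term} (h : AbsEq P Q) : WeakEq P Q := by
  obtain ⟨R, ⟨hop, hrefl, heq, hext, hcod, hbis⟩, hR⟩ := h
  refine ⟨R, ⟨hop, hrefl, heq, hext, hcod, ?_⟩, hR⟩
  intro P Q hPQ
  constructor
  · intro Q' hQ'
    rcases (hbis P Q hPQ).1 Q' hQ' with ⟨P', h1, _, h3⟩ | ⟨P'', P', h1, _, h3, h4⟩
    · exact ⟨P', h1, h3⟩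
    · exact ⟨P', weakTau_tail h1 h3, h4⟩
  · intro P' hP'
    rcases (hbis P Q hPQ).2 P' hP' with ⟨Q', h1, _, h3⟩ | ⟨Q'', Q', h1, _, h3, h4⟩
    · exact ⟨Q', h1, h3⟩
    · exact ⟨Q', weakTau_tail h1 h3, h4⟩

/-! ### Section B: steps preserve closedness -/

theorem nv_sub_vars {σ : ℕ → NV} {n : NV} {z : ℕ} (h : z ∈ (n.sub σ).vars) :
    ∃ y ∈ n.vars, z ∈ (σ y).vars := by
  cases n with
  | nm a => simp [NV.sub, NV.vars] at h
  | vr y => exact ⟨y, by simp [NV.vars], h⟩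

theorem fvar_applyVar : ∀ (T : Term) (σ : ℕ → NV) (z : ℕ),
    z ∈ (T.applyVar σ).fvar → ∃ y ∈ T.fvar, z ∈ (σ y).vars := by
  intro T
  induction T with
  | nil => intro σ z hz; simp [Term.applyVar, Term.fvar] at hz
  | inp n x k Ts ih =>
    intro σ z hz
    simp only [Term.applyVar, Term.fvar, Set.mem_union, Set.mem_diff,
      Set.mem_iUnion, Set.mem_singleton_iff] at hz ⊢
    rcases hz with hz | ⟨⟨i, hz⟩, hzx⟩
    · obtain ⟨y, hy, hy'⟩ := nv_sub_vars hz
      exact ⟨y, Or.inl hy, hy'⟩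
    · obtain ⟨y, hy, hy'⟩ := ih i _ z hz
      by_cases hyx : y = x
      · subst hyx; simp [Function.update, NV.vars] at hy'; exact absurd hy' hzx
      · rw [Function.update_of_ne hyx] at hy'
        exact ⟨y, Or.inr ⟨⟨i, hy⟩, hyx⟩, hy'⟩
  | out n k ms Ts ih =>
    intro σ z hz
    simp only [Term.applyVar, Term.fvar, Set.mem_union, Set.mem_iUnion] at hz ⊢
    rcases hz with hz | ⟨i, hz | hz⟩
    · obtain ⟨y, hy, hy'⟩ := nv_sub_vars hz; exact ⟨y, Or.inl hy, hy'⟩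
    · obtain ⟨y, hy, hy'⟩ := nv_sub_vars hz; exact ⟨y, Or.inr ⟨i, Or.inl hy⟩, hy'⟩
    · obtain ⟨y, hy, hy'⟩ := ih i σ z hz; exact ⟨y, Or.inr ⟨i, Or.inr hy⟩, hy'⟩
  | par S T ihS ihT =>
    intro σ z hz
    simp only [Term.applyVar, Term.fvar, Set.mem_union] at hz ⊢
    rcases hz with hz | hz
    · obtain ⟨y, hy, hy'⟩ := ihS σ z hz; exact ⟨y, Or.inl hy, hy'⟩
    · obtain ⟨y, hy, hy'⟩ := ihT σ z hz; exact ⟨y, Or.inr hy, hy'⟩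
  | res c T ih => intro σ z hz; exact ih σ z hz
  | mat p q T ih =>
    intro σ z hz
    simp only [Term.applyVar, Term.fvar, Set.mem_union] at hz ⊢
    rcases hz with (hz | hz) | hz
    · obtain ⟨y, hy, hy'⟩ := nv_sub_vars hz; exact ⟨y, Or.inl (Or.inl hy), hy'⟩
    · obtain ⟨y, hy, hy'⟩ := nv_sub_vars hz; exact ⟨y, Or.inl (Or.inr hy), hy'⟩
    · obtain ⟨y, hy, hy'⟩ := ih σ z hz; exact ⟨y, Or.inr hy, hy'⟩
  | mis p q T ih =>
    intro σ z hz
    simp only [Term.applyVar, Term.fvar, Set.mem_union] at hz ⊢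
    rcases hz with (hz | hz) | hz
    · obtain ⟨y, hy, hy'⟩ := nv_sub_vars hz; exact ⟨y, Or.inl (Or.inl hy), hy'⟩
    · obtain ⟨y, hy, hy'⟩ := nv_sub_vars hz; exact ⟨y, Or.inl (Or.inr hy), hy'⟩
    · obtain ⟨y, hy, hy'⟩ := ih σ z hz; exact ⟨y, Or.inr hy, hy'⟩
  | repInp n x T ih =>
    intro σ z hz
    simp only [Term.applyVar, Term.fvar, Set.mem_union, Set.mem_diff,
      Set.mem_singleton_iff] at hz ⊢
    rcases hz with hz | ⟨hz, hzx⟩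
    · obtain ⟨y, hy, hy'⟩ := nv_sub_vars hz; exact ⟨y, Or.inl hy, hy'⟩
    · obtain ⟨y, hy, hy'⟩ := ih _ z hz
      by_cases hyx : y = x
      · subst hyx; simp [Function.update, NV.vars] at hy'; exact absurd hy' hzx
      · rw [Function.update_of_ne hyx] at hy'
        exact ⟨y, Or.inr ⟨hy, hyx⟩, hy'⟩
  | repOut n m T ih =>
    intro σ z hz
    simp only [Term.applyVar, Term.fvar, Set.mem_union] at hz ⊢
    rcases hz with (hz | hz) | hz
    · obtain ⟨y, hy, hy'⟩ := nv_sub_vars hz; exact ⟨y, Or.inl (Or.inl hy), hy'⟩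
    · obtain ⟨y, hy, hy'⟩ := nv_sub_vars hz; exact ⟨y, Or.inl (Or.inr hy), hy'⟩
    · obtain ⟨y, hy, hy'⟩ := ih σ z hz; exact ⟨y, Or.inr hy, hy'⟩

theorem closed_subst1 {T : Term} {x : ℕ} {c : Name} (h : T.fvar ⊆ {x}) :
    Closed (T.subst1 x c) := by
  rw [Closed, Set.eq_empty_iff_forall_notMem]
  intro z hz
  obtain ⟨y, hy, hy'⟩ := fvar_applyVar T _ z hz
  have := h hy
  simp only [Set.mem_singleton_iff] at this
  subst this
  simp [NV.vars] at hy'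

theorem closed_par_iff {S T : Term} : Closed (.par S T) ↔ Closed S ∧ Closed T := by
  simp [Closed, Term.fvar, Set.union_empty_iff]

theorem closed_res_iff {c : Name} {T : Term} : Closed (.res c T) ↔ Closed T := Iff.rfl

theorem step_closed : ∀ {P : Term} {μ : Act} {P' : Term}, Step P μ P' → Closed P → Closed P' := by
  intro P μ P' h
  induction h with
  | @inp a x k Ts i c =>
    intro hc
    simp only [Closed, Term.fvar, Set.union_empty_iff, NV.vars] at hc
    apply closed_subst1
    rw [Set.diff_eq_empty] at hc
    exact le_trans (Set.subset_iUnion (fun i => (Ts i).fvar) i) hc.2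
  | @out a k ms Ts i c hms =>
    intro hc
    simp only [Closed, Term.fvar, Set.union_empty_iff] at hc
    rw [Closed, Set.eq_empty_iff_forall_notMem]
    intro z hz
    have : z ∈ (⋃ i, (ms i).vars ∪ (Ts i).fvar) := Set.mem_iUnion.2 ⟨i, Or.inr hz⟩
    rw [hc.2] at this; exact this
  | parR _ ih => intro hc; rw [closed_par_iff] at *; exact ⟨hc.1, ih hc.2⟩
  | parL _ ih => intro hc; rw [closed_par_iff] at *; exact ⟨ih hc.1, hc.2⟩
  | commL _ _ ih1 ih2 => intro hc; rw [closed_par_iff] at *; exact ⟨ih1 hc.1, ih2 hc.2⟩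
  | commR _ _ ih1 ih2 => intro hc; rw [closed_par_iff] at *; exact ⟨ih1 hc.1, ih2 hc.2⟩
  | closeL _ _ ih1 ih2 =>
    intro hc; rw [closed_par_iff] at hc
    rw [closed_res_iff, closed_par_iff]; exact ⟨ih1 hc.1, ih2 hc.2⟩
  | closeR _ _ ih1 ih2 =>
    intro hc; rw [closed_par_iff] at hc
    rw [closed_res_iff, closed_par_iff]; exact ⟨ih1 hc.1, ih2 hc.2⟩
  | open_ _ ih => intro hc; exact ih hc
  | resStep _ _ ih => intro hc; exact ih hc
  | matStep _ ih =>
    intro hc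
    simp only [Closed, Term.fvar, Set.union_empty_iff] at hc
    exact ih hc.2
  | misStep _ _ ih =>
    intro hc
    simp only [Closed, Term.fvar, Set.union_empty_iff] at hc
    exact ih hc.2
  | @repOutStep a b T =>
    intro hc
    simp only [Closed, Term.fvar, Set.union_empty_iff, NV.vars] at hc
    rw [closed_par_iff]
    refine ⟨hc.2, ?_⟩
    simp [Closed, Term.fvar, Set.union_empty_iff, NV.vars, hc.2]
  | @repInpStep a x T b =>
    intro hc
    simp only [Closed, Term.fvar, Set.union_empty_iff, NV.vars] at hc
    rw [closed_par_iff]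
    have hT : T.fvar ⊆ {x} := Set.diff_eq_empty.1 hc.2
    refine ⟨closed_subst1 hT, ?_⟩
    simp only [Closed, Term.fvar, Set.union_empty_iff, NV.vars]
    exact ⟨trivial, hc.2⟩

theorem weakTau_closed {P P' : Term} (h : WeakTau P P') (hc : Closed P) : Closed P' := by
  induction h with
  | refl => exact hc
  | tail _ h ih => exact step_closed h ih

/-! ### Section C: LTS inversion lemmas -/

theorem step_nil {μ : Act} {Z : Term} : ¬ Step .nil μ Z := by intro h; cases h

theorem tau_par_inv {A B Z : Term} (h : Tau (.par A B) Z) :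
    (∃ B', Tau B B' ∧ Z = .par A B') ∨
    (∃ A', Tau A A' ∧ Z = .par A' B) ∨
    (∃ a b A' B', Step A (.lab (.inp a b)) A' ∧ Step B (.lab (.out a b)) B' ∧ Z = .par A' B') ∨
    (∃ a b A' B', Step A (.lab (.out a b)) A' ∧ Step B (.lab (.inp a b)) B' ∧ Z = .par A' B') ∨
    (∃ a c A' B', Step A (.lab (.inp a c)) A' ∧ Step B (.lab (.bout a c)) B' ∧
      Z = .res c (.par A' B')) ∨
    (∃ a c A' B', Step A (.lab (.bout a c)) A' ∧ Step B (.lab (.inp a c)) B' ∧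
      Z = .res c (.par A' B')) := by
  cases h with
  | parR h => exact Or.inl ⟨_, h, rfl⟩
  | parL h => exact Or.inr (Or.inl ⟨_, h, rfl⟩)
  | commL h1 h2 => exact Or.inr (Or.inr (Or.inl ⟨_, _, _, _, h1, h2, rfl⟩))
  | commR h1 h2 => exact Or.inr (Or.inr (Or.inr (Or.inl ⟨_, _, _, _, h1, h2, rfl⟩)))
  | closeL h1 h2 => exact Or.inr (Or.inr (Or.inr (Or.inr (Or.inl ⟨_, _, _, _, h1, h2, rfl⟩))))
  | closeR h1 h2 => exact Or.inr (Or.inr (Or.inr (Or.inr (Or.inr ⟨_, _, _, _, h1, h2, rfl⟩))))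

theorem lab_par_inv {A B : Term} {ℓ : Label} {Z : Term} (h : Step (.par A B) (.lab ℓ) Z) :
    (∃ B', Step B (.lab ℓ) B' ∧ Z = .par A B') ∨
    (∃ A', Step A (.lab ℓ) A' ∧ Z = .par A' B) := by
  cases h with
  | parR h => exact Or.inl ⟨_, h, rfl⟩
  | parL h => exact Or.inr ⟨_, h, rfl⟩

theorem tau_res_inv {c : Name} {T Z : Term} (h : Tau (.res c T) Z) :
    ∃ T', Tau T T' ∧ Z = .res c T' := by
  cases h with
  | resStep h hn => exact ⟨_, h, rfl⟩

theorem lab_res_inv {c : Name} {T : Term} {ℓ : Label} {Z : Term}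
    (h : Step (.res c T) (.lab ℓ) Z) :
    (∃ T', Step T (.lab ℓ) T' ∧ Z = .res c T' ∧ c ∉ ℓ.names) ∨
    (∃ a T', ℓ = .bout a c ∧ Step T (.lab (.out a c)) T' ∧ Z = T') := by
  cases h with
  | resStep h hn => exact Or.inl ⟨_, h, rfl, hn⟩
  | open_ h => exact Or.inr ⟨_, _, rfl, h, rfl⟩

theorem step_out_inv {a : Name} {k : ℕ} {ms : Fin k → NV} {Ts : Fin k → Term} {μ : Act}
    {Z : Term} (h : Step (.out (.nm a) k ms Ts) μ Z) :
    ∃ i c, ms i = .nm c ∧ μ = .lab (.out a c) ∧ Z = Ts i := by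
  cases h with
  | out i hms => exact ⟨i, _, hms, rfl, rfl⟩

theorem step_inp_inv {a : Name} {x k : ℕ} {Ts : Fin k → Term} {μ : Act} {Z : Term}
    (h : Step (.inp (.nm a) x k Ts) μ Z) :
    ∃ i c, μ = .lab (.inp a c) ∧ Z = (Ts i).subst1 x c := by
  cases h with
  | inp i c => exact ⟨i, c, rfl, rfl⟩

theorem step_repInp_inv {a : Name} {x : ℕ} {T : Term} {μ : Act} {Z : Term}
    (h : Step (.repInp (.nm a) x T) μ Z) :
    ∃ b, μ = .lab (.inp a b) ∧ Z = .par (T.subst1 x b) (.repInp (.nm a) x T) := by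
  cases h with
  | repInpStep b => exact ⟨b, rfl, rfl⟩

theorem step_repOut_inv {a b : Name} {T : Term} {μ : Act} {Z : Term}
    (h : Step (.repOut (.nm a) (.nm b) T) μ Z) :
    μ = .lab (.out a b) ∧ Z = .par T (.repOut (.nm a) (.nm b) T) := by
  cases h with
  | repOutStep => exact ⟨rfl, rfl⟩

theorem step_mat_inv {a b : Name} {T : Term} {μ : Act} {Z : Term}
    (h : Step (.mat (.nm a) (.nm b) T) μ Z) : a = b ∧ Step T μ Z := by
  cases h with
  | matStep h => exact ⟨rfl, h⟩

theorem step_mat_ne {a b : Name} (hab : a ≠ b) {T : Term} {μ : Act} {Z : Term} :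
    ¬ Step (.mat (.nm a) (.nm b) T) μ Z := by
  intro h; exact hab (step_mat_inv h).1

/-- Lifting steps through contexts. -/
theorem weakTau_parR {A B B' : Term} (h : WeakTau B B') : WeakTau (.par A B) (.par A B') := by
  induction h with
  | refl => exact weakTau_refl _
  | tail _ h ih => exact weakTau_tail ih (Step.parR h)

theorem weakTau_parL {A A' B : Term} (h : WeakTau A A') : WeakTau (.par A B) (.par A' B) := by
  induction h with
  | refl => exact weakTau_refl _
  | tail _ h ih => exact weakTau_tail ih (Step.parL h)

theorem weakTau_par {A A' B B' : Term} (h1 : WeakTau A A') (h2 : WeakTau B B') :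
    WeakTau (.par A B) (.par A' B') :=
  weakTau_trans (weakTau_parL h1) (weakTau_parR h2)

theorem weakTau_res {c : Name} {A A' : Term} (h : WeakTau A A') :
    WeakTau (.res c A) (.res c A') := by
  induction h with
  | refl => exact weakTau_refl _
  | tail _ h ih => exact weakTau_tail ih (Step.resStep h (by simp [Act.names]))

theorem obs_head {P P' : Term} (h : WeakTau P P') (ho : Obs P') : Obs P := by
  obtain ⟨Q, ℓ, Q', h1, h2⟩ := ho
  exact ⟨Q, ℓ, Q', weakTau_trans h h1, h2⟩

/-! ### Section D: the pair (0, D0) : absolutely equal, not strongly equal -/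

abbrev OZ : Term := .out (.nm 0) 1 (fun _ => .nm 0) (fun _ => .nil)
abbrev IZ : Term := .inp (.nm 0) 0 1 (fun _ => .nil)
abbrev D0 : Term := .res 0 (.res 0 (.par OZ IZ))
abbrev D1 : Term := .res 0 (.res 0 (.par .nil .nil))

theorem closed_nil : Closed Term.nil := by simp [Closed, Term.fvar]

theorem closed_D0 : Closed D0 := by
  simp [Closed, Term.fvar, NV.vars]

theorem closed_D1 : Closed D1 := by
  simp [Closed, Term.fvar]

theorem tau_D0 : Tau D0 D1 := by
  apply Step.resStep _ (by simp [Act.names])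
  apply Step.resStep _ (by simp [Act.names])
  have h1 : Step OZ (.lab (.out 0 0)) .nil := Step.out 0 rfl
  have h2 : Step IZ (.lab (.inp 0 0)) .nil := Step.inp 0 0
  exact Step.commR h1 h2

theorem step_parnilnil {μ : Act} {Z : Term} : ¬ Step (.par .nil .nil) μ Z := by
  intro h
  cases h with
  | parR h => exact step_nil h
  | parL h => exact step_nil h
  | commL h1 _ => exact step_nil h1
  | commR h1 _ => exact step_nil h1
  | closeL h1 _ => exact step_nil h1
  | closeR h1 _ => exact step_nil h1

theorem D1_no_step {μ : Act} {Z : Term} : ¬ Step D1 μ Z := by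
  intro h
  cases h with
  | open_ h =>
    cases h with
    | resStep h _ => exact step_parnilnil h
  | resStep h _ =>
    cases h with
    | open_ h => exact step_parnilnil h
    | resStep h _ => exact step_parnilnil h

theorem step_OZIZ {μ : Act} {Z : Term} (h : Step (.par OZ IZ) μ Z) :
    (μ = .tau ∧ Z = .par .nil .nil) ∨
    (∃ c, μ = .lab (.inp 0 c) ∧ Z = .par OZ .nil) ∨
    (μ = .lab (.out 0 0) ∧ Z = .par .nil IZ) := by
  cases h with
  | parR h =>
    obtain ⟨i, c, hμ, hZ⟩ := step_inp_inv h
    exact Or.inr (Or.inl ⟨c, hμ, by rw [hZ]; rfl⟩)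
  | parL h =>
    obtain ⟨i, c, hms, hμ, hZ⟩ := step_out_inv h
    have hc : c = 0 := by simpa using hms.symm
    subst hc
    exact Or.inr (Or.inr ⟨hμ, by rw [hZ]⟩)
  | commL h1 _ => obtain ⟨i, c, hms, hμ, hZ⟩ := step_out_inv h1; simp at hμ
  | commR h1 h2 =>
    obtain ⟨i, c, hms, hμ, hZ⟩ := step_out_inv h1
    obtain ⟨j, c', hμ', hZ'⟩ := step_inp_inv h2
    refine Or.inl ⟨rfl, ?_⟩
    rw [hZ, hZ']
    rfl
  | closeL h1 h2 => obtain ⟨i, c, hms, hμ, hZ⟩ := step_out_inv h1; simp at hμ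
  | closeR h1 h2 => obtain ⟨i, c0, hms, hμ, hZ⟩ := step_out_inv h1; simp at hμ

theorem D0_step_inv {μ : Act} {Z : Term} (h : Step D0 μ Z) : μ = .tau ∧ Z = D1 := by
  cases h with
  | open_ h =>
    cases h with
    | resStep h hn => exact absurd (by simp [Act.names, Label.names]) hn
  | resStep h hn =>
    cases h with
    | open_ h => exact absurd (by simp [Act.names, Label.names]) hn
    | resStep h hn2 =>
      rcases step_OZIZ h with ⟨h1, h2⟩ | ⟨c, h1, h2⟩ | ⟨h1, h2⟩
      · subst h1 h2; exact ⟨rfl, rfl⟩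
      · subst h1; exact absurd (by simp [Act.names, Label.names]) hn2
      · subst h1; exact absurd (by simp [Act.names, Label.names]) hn2

theorem tau_D0_inv {Z : Term} (h : Tau D0 Z) : Z = D1 := (D0_step_inv h).2

theorem D0_no_lab {ℓ : Label} {Z : Term} : ¬ Step D0 (.lab ℓ) Z := by
  intro h; have := (D0_step_inv h).1; simp at this

/-- The weighted congruence closure used for `AbsEq 0 D0`. -/
inductive C3 : ℕ → Term → Term → Prop
  | refl {P : Term} : IsProc P → C3 0 P P
  | symm {n : ℕ} {P Q : Term} : C3 n P Q → C3 n Q P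
  | d0 : C3 1 .nil D0
  | d1 : C3 0 .nil D1
  | cpar {m n : ℕ} {L M P Q : Term} : C3 m L M → C3 n P Q → C3 (m + n) (.par L P) (.par M Q)
  | cres {n : ℕ} {P Q : Term} (c : Name) : C3 n P Q → C3 n (.res c P) (.res c Q)

def C3' (S T : Term) : Prop := ∃ n, C3 n S T

theorem C3'_symm {S T : Term} (h : C3' S T) : C3' T S := by
  obtain ⟨n, h⟩ := h; exact ⟨n, h.symm⟩

theorem C3'_par {A B C D : Term} (h1 : C3' A B) (h2 : C3' C D) :
    C3' (.par A C) (.par B D) := by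
  obtain ⟨m, h1⟩ := h1; obtain ⟨n, h2⟩ := h2; exact ⟨m + n, h1.cpar h2⟩

theorem C3'_res {A B : Term} (c : Name) (h : C3' A B) : C3' (.res c A) (.res c B) := by
  obtain ⟨n, h⟩ := h; exact ⟨n, h.cres c⟩

theorem C3_proc {n : ℕ} {S T : Term} (h : C3 n S T) : IsProc S ∧ IsProc T := by
  induction h with
  | refl h => exact ⟨h, h⟩
  | symm _ ih => exact ⟨ih.2, ih.1⟩
  | d0 => exact ⟨closed_nil, closed_D0⟩
  | d1 => exact ⟨closed_nil, closed_D1⟩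
  | cpar _ _ ih1 ih2 =>
    exact ⟨closed_par_iff.2 ⟨ih1.1, ih2.1⟩, closed_par_iff.2 ⟨ih1.2, ih2.2⟩⟩
  | cres c _ ih => exact ⟨ih.1, ih.2⟩

/-- The key invariant for C3: strong matching of visible actions, and
match-or-stutter for the internal action, with decreasing weight on stutters. -/
theorem inv3 : ∀ {n : ℕ} {S T : Term}, C3 n S T →
    (∀ T', Tau T T' → (∃ S', Tau S S' ∧ C3' S' T') ∨ (∃ m, m < n ∧ C3 m S T')) ∧
    (∀ S', Tau S S' → (∃ T', Tau T T' ∧ C3' S' T') ∨ (∃ m, m < n ∧ C3 m S' T)) ∧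
    (∀ ℓ T', Step T (.lab ℓ) T' → ∃ S', Step S (.lab ℓ) S' ∧ C3' S' T') ∧
    (∀ ℓ S', Step S (.lab ℓ) S' → ∃ T', Step T (.lab ℓ) T' ∧ C3' S' T') := by
  intro n S T h
  induction h with
  | @refl P hP =>
    refine ⟨?_, ?_, ?_, ?_⟩
    · intro T' hT'
      exact Or.inl ⟨T', hT', ⟨0, C3.refl (step_closed hT' hP)⟩⟩
    · intro S' hS'
      exact Or.inl ⟨S', hS', ⟨0, C3.refl (step_closed hS' hP)⟩⟩
    · intro ℓ T' hT'
      exact ⟨T', hT', ⟨0, C3.refl (step_closed hT' hP)⟩⟩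
    · intro ℓ S' hS'
      exact ⟨S', hS', ⟨0, C3.refl (step_closed hS' hP)⟩⟩
  | @symm n P Q _ ih =>
    obtain ⟨ih1, ih2, ih3, ih4⟩ := ih
    refine ⟨?_, ?_, ?_, ?_⟩
    · intro T' hT'
      rcases ih2 T' hT' with ⟨T2, h1, h2⟩ | ⟨m, hm, h2⟩
      · exact Or.inl ⟨T2, h1, C3'_symm h2⟩
      · exact Or.inr ⟨m, hm, h2.symm⟩
    · intro S' hS'
      rcases ih1 S' hS' with ⟨S2, h1, h2⟩ | ⟨m, hm, h2⟩
      · exact Or.inl ⟨S2, h1, C3'_symm h2⟩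
      · exact Or.inr ⟨m, hm, h2.symm⟩
    · intro ℓ T' hT'
      obtain ⟨S2, h1, h2⟩ := ih4 ℓ T' hT'
      exact ⟨S2, h1, C3'_symm h2⟩
    · intro ℓ S' hS'
      obtain ⟨T2, h1, h2⟩ := ih3 ℓ S' hS'
      exact ⟨T2, h1, C3'_symm h2⟩
  | d0 =>
    refine ⟨?_, ?_, ?_, ?_⟩
    · intro T' hT'
      rw [tau_D0_inv hT']
      exact Or.inr ⟨0, by omega, C3.d1⟩
    · intro S' hS'; exact absurd hS' step_nil
    · intro ℓ T' hT'; exact absurd hT' D0_no_lab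
    · intro ℓ S' hS'; exact absurd hS' step_nil
  | d1 =>
    refine ⟨?_, ?_, ?_, ?_⟩
    · intro T' hT'; exact absurd hT' D1_no_step
    · intro S' hS'; exact absurd hS' step_nil
    · intro ℓ T' hT'; exact absurd hT' D1_no_step
    · intro ℓ S' hS'; exact absurd hS' step_nil
  | @cpar m n L M P Q hLM hPQ ihLM ihPQ =>
    obtain ⟨iA1, iA2, iA3, iA4⟩ := ihLM
    obtain ⟨iB1, iB2, iB3, iB4⟩ := ihPQ
    refine ⟨?_, ?_, ?_, ?_⟩
    · intro T' hT'
      rcases tau_par_inv hT' with ⟨Q', h1, rfl⟩ | ⟨M', h1, rfl⟩ |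
        ⟨a, b, M', Q', h1, h2, rfl⟩ | ⟨a, b, M', Q', h1, h2, rfl⟩ |
        ⟨a, c, M', Q', h1, h2, rfl⟩ | ⟨a, c, M', Q', h1, h2, rfl⟩
      · rcases iB1 Q' h1 with ⟨P', hs, hc⟩ | ⟨m2, hm2, hc⟩
        · exact Or.inl ⟨.par L P', Step.parR hs, C3'_par ⟨m, hLM⟩ hc⟩
        · exact Or.inr ⟨m + m2, by omega, hLM.cpar hc⟩
      · rcases iA1 M' h1 with ⟨L', hs, hc⟩ | ⟨m2, hm2, hc⟩
        · exact Or.inl ⟨.par L' P, Step.parL hs, C3'_par hc ⟨n, hPQ⟩⟩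
        · exact Or.inr ⟨m2 + n, by omega, hc.cpar hPQ⟩
      · obtain ⟨L', hsL, hcL⟩ := iA3 _ _ h1
        obtain ⟨P', hsP, hcP⟩ := iB3 _ _ h2
        exact Or.inl ⟨.par L' P', Step.commL hsL hsP, C3'_par hcL hcP⟩
      · obtain ⟨L', hsL, hcL⟩ := iA3 _ _ h1
        obtain ⟨P', hsP, hcP⟩ := iB3 _ _ h2
        exact Or.inl ⟨.par L' P', Step.commR hsL hsP, C3'_par hcL hcP⟩
      · obtain ⟨L', hsL, hcL⟩ := iA3 _ _ h1
        obtain ⟨P', hsP, hcP⟩ := iB3 _ _ h2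
        exact Or.inl ⟨.res c (.par L' P'), Step.closeL hsL hsP,
          C3'_res c (C3'_par hcL hcP)⟩
      · obtain ⟨L', hsL, hcL⟩ := iA3 _ _ h1
        obtain ⟨P', hsP, hcP⟩ := iB3 _ _ h2
        exact Or.inl ⟨.res c (.par L' P'), Step.closeR hsL hsP,
          C3'_res c (C3'_par hcL hcP)⟩
    · intro S' hS'
      rcases tau_par_inv hS' with ⟨P', h1, rfl⟩ | ⟨L', h1, rfl⟩ |
        ⟨a, b, L', P', h1, h2, rfl⟩ | ⟨a, b, L', P', h1, h2, rfl⟩ |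
        ⟨a, c, L', P', h1, h2, rfl⟩ | ⟨a, c, L', P', h1, h2, rfl⟩
      · rcases iB2 P' h1 with ⟨Q', hs, hc⟩ | ⟨m2, hm2, hc⟩
        · exact Or.inl ⟨.par M Q', Step.parR hs, C3'_par ⟨m, hLM⟩ hc⟩
        · exact Or.inr ⟨m + m2, by omega, hLM.cpar hc⟩
      · rcases iA2 L' h1 with ⟨M', hs, hc⟩ | ⟨m2, hm2, hc⟩
        · exact Or.inl ⟨.par M' Q, Step.parL hs, C3'_par hc ⟨n, hPQ⟩⟩
        · exact Or.inr ⟨m2 + n, by omega, hc.cpar hPQ⟩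
      · obtain ⟨M', hsM, hcM⟩ := iA4 _ _ h1
        obtain ⟨Q', hsQ, hcQ⟩ := iB4 _ _ h2
        exact Or.inl ⟨.par M' Q', Step.commL hsM hsQ, C3'_par hcM hcQ⟩
      · obtain ⟨M', hsM, hcM⟩ := iA4 _ _ h1
        obtain ⟨Q', hsQ, hcQ⟩ := iB4 _ _ h2
        exact Or.inl ⟨.par M' Q', Step.commR hsM hsQ, C3'_par hcM hcQ⟩
      · obtain ⟨M', hsM, hcM⟩ := iA4 _ _ h1
        obtain ⟨Q', hsQ, hcQ⟩ := iB4 _ _ h2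
        exact Or.inl ⟨.res c (.par M' Q'), Step.closeL hsM hsQ,
          C3'_res c (C3'_par hcM hcQ)⟩
      · obtain ⟨M', hsM, hcM⟩ := iA4 _ _ h1
        obtain ⟨Q', hsQ, hcQ⟩ := iB4 _ _ h2
        exact Or.inl ⟨.res c (.par M' Q'), Step.closeR hsM hsQ,
          C3'_res c (C3'_par hcM hcQ)⟩
    · intro ℓ T' hT'
      rcases lab_par_inv hT' with ⟨Q', h1, rfl⟩ | ⟨M', h1, rfl⟩
      · obtain ⟨P', hs, hc⟩ := iB3 _ _ h1
        exact ⟨.par L P', Step.parR hs, C3'_par ⟨m, hLM⟩ hc⟩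
      · obtain ⟨L', hs, hc⟩ := iA3 _ _ h1
        exact ⟨.par L' P, Step.parL hs, C3'_par hc ⟨n, hPQ⟩⟩
    · intro ℓ S' hS'
      rcases lab_par_inv hS' with ⟨P', h1, rfl⟩ | ⟨L', h1, rfl⟩
      · obtain ⟨Q', hs, hc⟩ := iB4 _ _ h1
        exact ⟨.par M Q', Step.parR hs, C3'_par ⟨m, hLM⟩ hc⟩
      · obtain ⟨M', hs, hc⟩ := iA4 _ _ h1
        exact ⟨.par M' Q, Step.parL hs, C3'_par hc ⟨n, hPQ⟩⟩
  | @cres n P Q c hPQ ih =>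
    obtain ⟨i1, i2, i3, i4⟩ := ih
    refine ⟨?_, ?_, ?_, ?_⟩
    · intro T' hT'
      obtain ⟨Q', h1, rfl⟩ := tau_res_inv hT'
      rcases i1 Q' h1 with ⟨P', hs, hc⟩ | ⟨m2, hm2, hc⟩
      · exact Or.inl ⟨.res c P', Step.resStep hs (by simp [Act.names]), C3'_res c hc⟩
      · exact Or.inr ⟨m2, hm2, hc.cres c⟩
    · intro S' hS'
      obtain ⟨P', h1, rfl⟩ := tau_res_inv hS'
      rcases i2 P' h1 with ⟨Q', hs, hc⟩ | ⟨m2, hm2, hc⟩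
      · exact Or.inl ⟨.res c Q', Step.resStep hs (by simp [Act.names]), C3'_res c hc⟩
      · exact Or.inr ⟨m2, hm2, hc.cres c⟩
    · intro ℓ T' hT'
      rcases lab_res_inv hT' with ⟨Q', h1, rfl, hn⟩ | ⟨a, Q', rfl, h1, rfl⟩
      · obtain ⟨P', hs, hc⟩ := i3 _ _ h1
        exact ⟨.res c P', Step.resStep hs hn, C3'_res c hc⟩
      · obtain ⟨P', hs, hc⟩ := i3 _ _ h1
        exact ⟨P', Step.open_ hs, hc⟩
    · intro ℓ S' hS'
      rcases lab_res_inv hS' with ⟨P', h1, rfl, hn⟩ | ⟨a, P', rfl, h1, rfl⟩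
      · obtain ⟨Q', hs, hc⟩ := i4 _ _ h1
        exact ⟨.res c Q', Step.resStep hs hn, C3'_res c hc⟩
      · obtain ⟨Q', hs, hc⟩ := i4 _ _ h1
        exact ⟨Q', Step.open_ hs, hc⟩

theorem codiv3 : ∀ (n : ℕ) {S T : Term}, C3 n S T →
    (∀ f, f 0 = T → TauSeq f → ∃ k, 1 ≤ k ∧ ∃ S', TauWeak S S' ∧ C3' S' (f k)) ∧
    (∀ f, f 0 = S → TauSeq f → ∃ k, 1 ≤ k ∧ ∃ T', TauWeak T T' ∧ C3' T' (f k)) := by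
  intro n
  induction n using Nat.strong_induction_on with
  | _ n ih =>
    intro S T h
    constructor
    · intro f hf0 hfs
      have hstep : Tau T (f 1) := by rw [← hf0]; exact hfs 0
      rcases (inv3 h).1 (f 1) hstep with ⟨S', hs, hc⟩ | ⟨m, hm, hc⟩
      · exact ⟨1, le_refl 1, S', ⟨S', hs, weakTau_refl _⟩, hc⟩
      · obtain ⟨k, hk, S', hw, hc'⟩ := (ih m hm hc).1 (fun i => f (i + 1)) rfl
          (fun i => hfs (i + 1))
        exact ⟨k + 1, by omega, S', hw, hc'⟩
    · intro f hf0 hfs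
      have hstep : Tau S (f 1) := by rw [← hf0]; exact hfs 0
      rcases (inv3 h).2.1 (f 1) hstep with ⟨T', hs, hc⟩ | ⟨m, hm, hc⟩
      · exact ⟨1, le_refl 1, T', ⟨T', hs, weakTau_refl _⟩, C3'_symm hc⟩
      · obtain ⟨k, hk, T', hw, hc'⟩ := (ih m hm hc).2 (fun i => f (i + 1)) rfl
          (fun i => hfs (i + 1))
        exact ⟨k + 1, by omega, T', hw, hc'⟩

theorem obs3 : ∀ {T T₀ : Term}, WeakTau T T₀ → ∀ {ℓ : Label} {T₁ : Term},
    Step T₀ (.lab ℓ) T₁ → ∀ {S : Term}, C3' S T → Obs S := by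
  intro T T₀ hw
  induction hw using Relation.ReflTransGen.head_induction_on with
  | refl =>
    intro ℓ T₁ hstep S hc
    obtain ⟨n, hc⟩ := hc
    obtain ⟨S', hs, _⟩ := (inv3 hc).2.2.1 ℓ T₁ hstep
    exact ⟨S, ℓ, S', weakTau_refl _, hs⟩
  | head hT hw ih =>
    intro ℓ T₁ hstep S hc
    obtain ⟨n, hc⟩ := hc
    rcases (inv3 hc).1 _ hT with ⟨S', hs, hc'⟩ | ⟨m, _, hc'⟩
    · exact obs_head (weakTau_single hs) (ih hstep hc')
    · exact ih hstep ⟨m, hc'⟩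

theorem equip3 : Equipollent C3' := by
  intro S T hc
  constructor
  · rintro ⟨S₀, ℓ, S₁, hw, hstep⟩
    exact obs3 hw hstep (C3'_symm hc)
  · rintro ⟨T₀, ℓ, T₁, hw, hstep⟩
    exact obs3 hw hstep hc

theorem goodAbs3 : GoodAbs C3' := by
  refine ⟨?_, ?_, equip3, ⟨?_, ?_⟩, ?_, ?_⟩
  · rintro P Q ⟨n, h⟩; exact C3_proc h
  · intro P hP; exact ⟨0, C3.refl hP⟩
  · intro L M P Q h1 h2; exact C3'_par h1 h2
  · intro P Q c h; exact C3'_res c h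
  · rintro P Q ⟨n, h⟩
    constructor
    · intro f hf0 hfs
      obtain ⟨k, hk, S', hw, hc⟩ := (codiv3 n h).1 f hf0 hfs
      exact ⟨k, hk, S', hw, hc⟩
    · intro f hf0 hfs
      obtain ⟨k, hk, T', hw, hc⟩ := (codiv3 n h).2 f hf0 hfs
      exact ⟨k, hk, T', hw, hc⟩
  · rintro P Q ⟨n, h⟩
    constructor
    · intro Q' hQ'
      rcases (inv3 h).1 Q' hQ' with ⟨P', hs, hc⟩ | ⟨m, _, hc⟩
      · exact Or.inr ⟨P, P', weakTau_refl _, ⟨n, h⟩, hs, hc⟩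
      · exact Or.inl ⟨P, weakTau_refl _, ⟨n, h⟩, ⟨m, hc⟩⟩
    · intro P' hP'
      rcases (inv3 h).2.1 P' hP' with ⟨Q', hs, hc⟩ | ⟨m, _, hc⟩
      · exact Or.inr ⟨Q, Q', weakTau_refl _, ⟨n, h⟩, hs, hc⟩
      · exact Or.inl ⟨Q, weakTau_refl _, ⟨n, h⟩, ⟨m, hc⟩⟩

theorem absEq_nil_D0 : AbsEq .nil D0 := ⟨C3', goodAbs3, ⟨1, C3.d0⟩⟩

theorem not_strongEq_nil_D0 : ¬ StrongEq .nil D0 := by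
  rintro ⟨R, ⟨_, _, _, _, hsb⟩, hR⟩
  obtain ⟨P', hP', _⟩ := hsb.2 _ _ _ hR tau_D0
  exact step_nil hP'

/-! ### Section E: the divergent process Ω on the private channel 9 -/

def AA : ℕ → Term
  | 0 => .repOut (.nm 9) (.nm 9) .nil
  | n + 1 => .par .nil (AA n)

def BB : ℕ → Term
  | 0 => .repInp (.nm 9) 0 .nil
  | n + 1 => .par .nil (BB n)

def wom (n : ℕ) : Term := .res 9 (.res 9 (.par (AA n) (BB n)))

theorem closed_AA (n : ℕ) : Closed (AA n) := by
  induction n with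
  | zero => simp [AA, Closed, Term.fvar, NV.vars]
  | succ n ih => rw [AA, closed_par_iff]; exact ⟨closed_nil, ih⟩

theorem closed_BB (n : ℕ) : Closed (BB n) := by
  induction n with
  | zero => simp [BB, Closed, Term.fvar, NV.vars]
  | succ n ih => rw [BB, closed_par_iff]; exact ⟨closed_nil, ih⟩

theorem closed_wom (n : ℕ) : Closed (wom n) := by
  rw [wom, closed_res_iff, closed_res_iff, closed_par_iff]
  exact ⟨closed_AA n, closed_BB n⟩

theorem stepAA (n : ℕ) : Step (AA n) (.lab (.out 9 9)) (AA (n + 1)) := by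
  induction n with
  | zero => exact Step.repOutStep
  | succ n ih => exact Step.parR ih

theorem stepBB (n : ℕ) (b : Name) : Step (BB n) (.lab (.inp 9 b)) (BB (n + 1)) := by
  induction n with
  | zero => exact Step.repInpStep b
  | succ n ih => exact Step.parR ih

theorem stepAA_inv : ∀ {n : ℕ} {μ : Act} {Z : Term}, Step (AA n) μ Z →
    μ = .lab (.out 9 9) ∧ Z = AA (n + 1) := by
  intro n
  induction n with
  | zero =>
    intro μ Z h
    obtain ⟨h1, h2⟩ := step_repOut_inv h
    exact ⟨h1, h2⟩
  | succ n ih =>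
    intro μ Z h
    cases h with
    | parR h =>
      obtain ⟨h1, h2⟩ := ih h
      exact ⟨h1, by rw [show AA (n + 1 + 1) = .par .nil (AA (n + 1)) from rfl, h2]⟩
    | parL h => exact absurd h step_nil
    | commL h1 _ => exact absurd h1 step_nil
    | commR h1 _ => exact absurd h1 step_nil
    | closeL h1 _ => exact absurd h1 step_nil
    | closeR h1 _ => exact absurd h1 step_nil

theorem stepBB_inv : ∀ {n : ℕ} {μ : Act} {Z : Term}, Step (BB n) μ Z →
    ∃ b, μ = .lab (.inp 9 b) ∧ Z = BB (n + 1) := by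
  intro n
  induction n with
  | zero =>
    intro μ Z h
    obtain ⟨b, h1, h2⟩ := step_repInp_inv h
    exact ⟨b, h1, h2⟩
  | succ n ih =>
    intro μ Z h
    cases h with
    | parR h =>
      obtain ⟨b, h1, h2⟩ := ih h
      exact ⟨b, h1, by rw [show BB (n + 1 + 1) = .par .nil (BB (n + 1)) from rfl, h2]⟩
    | parL h => exact absurd h step_nil
    | commL h1 _ => exact absurd h1 step_nil
    | commR h1 _ => exact absurd h1 step_nil
    | closeL h1 _ => exact absurd h1 step_nil
    | closeR h1 _ => exact absurd h1 step_nil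

theorem tau_wom (n : ℕ) : Tau (wom n) (wom (n + 1)) := by
  apply Step.resStep _ (by simp [Act.names])
  apply Step.resStep _ (by simp [Act.names])
  exact Step.commR (stepAA n) (stepBB n 9)

theorem step_parAB_inv {n : ℕ} {μ : Act} {Z : Term}
    (h : Step (.par (AA n) (BB n)) μ Z) :
    (μ = .tau ∧ Z = .par (AA (n + 1)) (BB (n + 1))) ∨
    (μ = .lab (.out 9 9) ∧ Z = .par (AA (n + 1)) (BB n)) ∨
    (∃ b, μ = .lab (.inp 9 b) ∧ Z = .par (AA n) (BB (n + 1))) := by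
  cases h with
  | parR h => obtain ⟨b, h1, h2⟩ := stepBB_inv h; exact Or.inr (Or.inr ⟨b, h1, by rw [h2]⟩)
  | parL h => obtain ⟨h1, h2⟩ := stepAA_inv h; exact Or.inr (Or.inl ⟨h1, by rw [h2]⟩)
  | commL h1 _ => obtain ⟨h1', _⟩ := stepAA_inv h1; simp at h1'
  | commR h1 h2 =>
    obtain ⟨h1', hZ1⟩ := stepAA_inv h1
    obtain ⟨b, h2', hZ2⟩ := stepBB_inv h2
    exact Or.inl ⟨rfl, by rw [hZ1, hZ2]⟩
  | closeL h1 _ => obtain ⟨h1', _⟩ := stepAA_inv h1; simp at h1'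
  | closeR h1 _ => obtain ⟨h1', _⟩ := stepAA_inv h1; simp at h1'

theorem step_wom_inv {n : ℕ} {μ : Act} {Z : Term} (h : Step (wom n) μ Z) :
    μ = .tau ∧ Z = wom (n + 1) := by
  have h' : Step (.res 9 (.res 9 (.par (AA n) (BB n)))) μ Z := h
  cases h' with
  | open_ h1 =>
    cases h1 with
    | resStep h2 hn =>
      rcases step_parAB_inv h2 with ⟨h3, _⟩ | ⟨h3, _⟩ | ⟨b, h3, _⟩
      · simp at h3
      · injection h3 with h3'; injection h3' with h4 h5
        subst h4
        exact absurd (by simp [Act.names, Label.names]) hn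
      · simp at h3
  | resStep h1 hn =>
    cases h1 with
    | open_ h2 =>
      rcases step_parAB_inv h2 with ⟨h3, _⟩ | ⟨h3, _⟩ | ⟨b, h3, _⟩
      · simp at h3
      · injection h3 with h3'; injection h3' with h4 h5
        exact absurd (by simp [Act.names, Label.names]) hn
      · simp at h3
    | resStep h2 hn2 =>
      rcases step_parAB_inv h2 with ⟨h3, hZ⟩ | ⟨h3, hZ⟩ | ⟨b, h3, hZ⟩
      · subst h3 hZ; exact ⟨rfl, rfl⟩
      · subst h3; exact absurd (by simp [Act.names, Label.names]) hn2
      · subst h3; exact absurd (by simp [Act.names, Label.names]) hn2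

theorem tau_wom_inv {n : ℕ} {Z : Term} (h : Tau (wom n) Z) : Z = wom (n + 1) :=
  (step_wom_inv h).2

theorem wom_no_lab {n : ℕ} {ℓ : Label} {Z : Term} : ¬ Step (wom n) (.lab ℓ) Z := by
  intro h; have := (step_wom_inv h).1; simp at this

/-! ### Section F: the processes p = (ū3+ū4+ū5) | !u(x).[x=3]ū4  and
    q = (ū3+ū5) | !u(x).[x=3]ū4 : weakly equal but not absolutely equal. -/

abbrev O4 : Term := .out (.nm 1) 1 (fun _ => .nm 4) (fun _ => .nil)
abbrev Mb (b : Name) : Term := .mat (.nm b) (.nm 3) O4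
abbrev Ibody : Term := .mat (.vr 0) (.nm 3) O4
abbrev Irep : Term := .repInp (.nm 1) 0 Ibody
abbrev B345 : Term := .out (.nm 1) 3 (fun i => .nm (3 + i.val)) (fun _ => .nil)
abbrev B35 : Term := .out (.nm 1) 2 (fun i => .nm (3 + 2 * i.val)) (fun _ => .nil)
abbrev pT : Term := .par B345 Irep
abbrev qT : Term := .par B35 Irep

example : Ibody.subst1 0 5 = Mb 5 := rfl

theorem closed_O4 : Closed O4 := by simp [Closed, Term.fvar, NV.vars]
theorem closed_Mb (b : Name) : Closed (Mb b) := by simp [Closed, Term.fvar, NV.vars]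
theorem closed_Irep : Closed Irep := by
  simp [Closed, Term.fvar, NV.vars]
theorem closed_B345 : Closed B345 := by simp [Closed, Term.fvar, NV.vars]
theorem closed_B35 : Closed B35 := by simp [Closed, Term.fvar, NV.vars]

theorem stepIrep (b : Name) : Step Irep (.lab (.inp 1 b)) (.par (Mb b) Irep) :=
  Step.repInpStep b

theorem stepIrep_inv {μ : Act} {Z : Term} (h : Step Irep μ Z) :
    ∃ b, μ = .lab (.inp 1 b) ∧ Z = .par (Mb b) Irep := by
  obtain ⟨b, h1, h2⟩ := step_repInp_inv h
  exact ⟨b, h1, h2⟩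

theorem stepM3 : Step (Mb 3) (.lab (.out 1 4)) .nil :=
  Step.matStep (Step.out 0 rfl)

theorem stepMb_inv {b : Name} {μ : Act} {Z : Term} (h : Step (Mb b) μ Z) :
    b = 3 ∧ μ = .lab (.out 1 4) ∧ Z = .nil := by
  obtain ⟨hb, h2⟩ := step_mat_inv h
  obtain ⟨i, c, hms, hμ, hZ⟩ := step_out_inv h2
  have hc : c = 4 := by simpa using hms.symm
  subst hc
  exact ⟨hb, hμ, hZ⟩

theorem stepB345_3 : Step B345 (.lab (.out 1 3)) .nil := Step.out 0 rfl
theorem stepB345_4 : Step B345 (.lab (.out 1 4)) .nil := Step.out 1 rfl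
theorem stepB345_5 : Step B345 (.lab (.out 1 5)) .nil := Step.out 2 rfl
theorem stepB35_3 : Step B35 (.lab (.out 1 3)) .nil := Step.out 0 rfl
theorem stepB35_5 : Step B35 (.lab (.out 1 5)) .nil := Step.out 1 rfl

theorem stepB345_inv {μ : Act} {Z : Term} (h : Step B345 μ Z) :
    (μ = .lab (.out 1 3) ∨ μ = .lab (.out 1 4) ∨ μ = .lab (.out 1 5)) ∧ Z = .nil := by
  obtain ⟨i, c, hms, hμ, hZ⟩ := step_out_inv h
  fin_cases i
  · have hc : c = 3 := by simpa using hms.symm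
    subst hc; exact ⟨Or.inl hμ, hZ⟩
  · have hc : c = 4 := by simpa using hms.symm
    subst hc; exact ⟨Or.inr (Or.inl hμ), hZ⟩
  · have hc : c = 5 := by simpa using hms.symm
    subst hc; exact ⟨Or.inr (Or.inr hμ), hZ⟩

theorem stepB35_inv {μ : Act} {Z : Term} (h : Step B35 μ Z) :
    (μ = .lab (.out 1 3) ∨ μ = .lab (.out 1 5)) ∧ Z = .nil := by
  obtain ⟨i, c, hms, hμ, hZ⟩ := step_out_inv h
  fin_cases i
  · have hc : c = 3 := by simpa using hms.symm
    subst hc; exact ⟨Or.inl hμ, hZ⟩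
  · have hc : c = 5 := by simpa using hms.symm
    subst hc; exact ⟨Or.inr hμ, hZ⟩

/-- Inert side-junk: parallel compositions of `nil` and match-guarded outputs. -/
inductive SJ : Term → Prop
  | nil : SJ .nil
  | mb (b : Name) : SJ (Mb b)
  | par {s t : Term} : SJ s → SJ t → SJ (.par s t)

theorem SJ_closed {t : Term} (h : SJ t) : Closed t := by
  induction h with
  | nil => exact closed_nil
  | mb b => exact closed_Mb b
  | par _ _ ih1 ih2 => exact closed_par_iff.2 ⟨ih1, ih2⟩

theorem SJ_step {t : Term} (h : SJ t) : ∀ {μ Z}, Step t μ Z →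
    μ = .lab (.out 1 4) ∧ SJ Z := by
  induction h with
  | nil => intro μ Z h; exact absurd h step_nil
  | mb b =>
    intro μ Z h
    obtain ⟨_, h2, h3⟩ := stepMb_inv h
    exact ⟨h2, h3 ▸ SJ.nil⟩
  | @par s t hs ht ihs iht =>
    intro μ Z h
    cases h with
    | parR h => obtain ⟨h1, h2⟩ := iht h; exact ⟨h1, SJ.par hs h2⟩
    | parL h => obtain ⟨h1, h2⟩ := ihs h; exact ⟨h1, SJ.par h2 ht⟩
    | commL h1 _ => have := (ihs h1).1; simp at this
    | commR _ h2 => have := (iht h2).1; simp at this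
    | closeL h1 _ => have := (ihs h1).1; simp at this
    | closeR h1 _ => have := (ihs h1).1; simp at this

/-- Contexts around the replicated input. -/
def plug : List (Bool × Term) → Term → Term
  | [], t => t
  | (true, J) :: L, t => .par J (plug L t)
  | (false, J) :: L, t => .par (plug L t) J

def SJL (L : List (Bool × Term)) : Prop := ∀ p ∈ L, SJ p.2

theorem SJL_nil : SJL [] := by intro p hp; cases hp

theorem SJL_cons {s : Bool} {J : Term} {L : List (Bool × Term)} (hJ : SJ J) (hL : SJL L) :
    SJL ((s, J) :: L) := by
  intro p hp
  rcases List.mem_cons.1 hp with rfl | hp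
  · exact hJ
  · exact hL p hp

theorem SJL_of_cons {s : Bool} {J : Term} {L : List (Bool × Term)}
    (h : SJL ((s, J) :: L)) : SJ J ∧ SJL L :=
  ⟨h (s, J) (List.mem_cons_self), fun p hp => h p (List.mem_cons_of_mem _ hp)⟩

theorem plug_append (L1 L2 : List (Bool × Term)) (t : Term) :
    plug (L1 ++ L2) t = plug L1 (plug L2 t) := by
  induction L1 with
  | nil => rfl
  | cons p L1 ih =>
    obtain ⟨s, J⟩ := p
    cases s <;> simp [plug, ih]

theorem SJL_append {L1 L2 : List (Bool × Term)} (h1 : SJL L1) (h2 : SJL L2) :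
    SJL (L1 ++ L2) := by
  intro p hp
  rcases List.mem_append.1 hp with hp | hp
  · exact h1 p hp
  · exact h2 p hp

theorem plug_closed {L : List (Bool × Term)} (hL : SJL L) {t : Term} (ht : Closed t) :
    Closed (plug L t) := by
  induction L with
  | nil => exact ht
  | cons p L ih =>
    obtain ⟨s, J⟩ := p
    obtain ⟨hJ, hL'⟩ := SJL_of_cons hL
    cases s
    · exact closed_par_iff.2 ⟨ih hL', SJ_closed hJ⟩
    · exact closed_par_iff.2 ⟨SJ_closed hJ, ih hL'⟩

theorem plug_lift {t t' : Term} {μ : Act} (h : Step t μ t') (L : List (Bool × Term)) :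
    Step (plug L t) μ (plug L t') := by
  induction L with
  | nil => exact h
  | cons p L ih =>
    obtain ⟨s, J⟩ := p
    cases s
    · exact Step.parL ih
    · exact Step.parR ih

/-- Inversion for steps of `plug L Irep`. -/
theorem plugX_inv : ∀ (L : List (Bool × Term)), SJL L → ∀ {μ : Act} {Z : Term},
    Step (plug L Irep) μ Z →
    (∃ b, μ = .lab (.inp 1 b) ∧ Z = plug L (.par (Mb b) Irep)) ∨
    (μ = .lab (.out 1 4) ∧ ∃ L', SJL L' ∧ Z = plug L' Irep) ∨
    (μ = .tau ∧ ∃ L', SJL L' ∧ Z = plug L' (.par (Mb 4) Irep)) := by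
  intro L
  induction L with
  | nil =>
    intro _ μ Z h
    obtain ⟨b, h1, h2⟩ := stepIrep_inv h
    exact Or.inl ⟨b, h1, h2⟩
  | cons p L ih =>
    intro hL μ Z h
    obtain ⟨s, J⟩ := p
    obtain ⟨hJ, hL'⟩ := SJL_of_cons hL
    cases s
    · -- plug ((false, J) :: L) t = par (plug L t) J
      cases h with
      | parR h =>
        obtain ⟨h1, h2⟩ := SJ_step hJ h
        exact Or.inr (Or.inl ⟨h1, (false, _) :: L, SJL_cons h2 hL', rfl⟩)
      | parL h =>
        rcases ih hL' h with ⟨b, h1, rfl⟩ | ⟨h1, L', hL2, rfl⟩ | ⟨h1, L', hL2, rfl⟩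
        · exact Or.inl ⟨b, h1, rfl⟩
        · exact Or.inr (Or.inl ⟨h1, (false, J) :: L', SJL_cons hJ hL2, rfl⟩)
        · exact Or.inr (Or.inr ⟨h1, (false, J) :: L', SJL_cons hJ hL2, rfl⟩)
      | commL h1 h2 =>
        obtain ⟨h3, h4⟩ := SJ_step hJ h2
        injection h3 with h3'
        injection h3' with h5 h6
        subst h5; subst h6
        rcases ih hL' h1 with ⟨b, h7, rfl⟩ | ⟨h7, _, _, _⟩ | ⟨h7, _, _, _⟩
        · injection h7 with h7'
          injection h7' with h8 h9
          subst h9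
          exact Or.inr (Or.inr ⟨rfl, (false, _) :: L, SJL_cons h4 hL', rfl⟩)
        · simp at h7
        · simp at h7
      | commR h1 h2 =>
        have := (SJ_step hJ h2).1; simp at this
      | closeL h1 h2 =>
        have := (SJ_step hJ h2).1; simp at this
      | closeR h1 h2 =>
        rcases ih hL' h1 with ⟨b, h7, _⟩ | ⟨h7, _, _, _⟩ | ⟨h7, _, _, _⟩ <;> simp at h7
    · -- plug ((true, J) :: L) t = par J (plug L t)
      cases h with
      | parR h =>
        rcases ih hL' h with ⟨b, h1, rfl⟩ | ⟨h1, L', hL2, rfl⟩ | ⟨h1, L', hL2, rfl⟩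
        · exact Or.inl ⟨b, h1, rfl⟩
        · exact Or.inr (Or.inl ⟨h1, (true, J) :: L', SJL_cons hJ hL2, rfl⟩)
        · exact Or.inr (Or.inr ⟨h1, (true, J) :: L', SJL_cons hJ hL2, rfl⟩)
      | parL h =>
        obtain ⟨h1, h2⟩ := SJ_step hJ h
        exact Or.inr (Or.inl ⟨h1, (true, _) :: L, SJL_cons h2 hL', rfl⟩)
      | commL h1 h2 =>
        have := (SJ_step hJ h1).1; simp at this
      | commR h1 h2 =>
        obtain ⟨h3, h4⟩ := SJ_step hJ h1
        injection h3 with h3'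
        injection h3' with h5 h6
        subst h5; subst h6
        rcases ih hL' h2 with ⟨b, h7, rfl⟩ | ⟨h7, _, _, _⟩ | ⟨h7, _, _, _⟩
        · injection h7 with h7'
          injection h7' with h8 h9
          subst h9
          exact Or.inr (Or.inr ⟨rfl, (true, _) :: L, SJL_cons h4 hL', rfl⟩)
        · simp at h7
        · simp at h7
      | closeL h1 h2 =>
        rcases ih hL' h2 with ⟨b, h7, _⟩ | ⟨h7, _, _, _⟩ | ⟨h7, _, _, _⟩ <;> simp at h7
      | closeR h1 h2 =>
        have := (SJ_step hJ h1).1; simp at this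

theorem plugX_inp (L : List (Bool × Term)) (b : Name) :
    Step (plug L Irep) (.lab (.inp 1 b)) (plug L (.par (Mb b) Irep)) :=
  plug_lift (stepIrep b) L

theorem plugX_out4 (L : List (Bool × Term)) :
    Step (plug L (.par (Mb 3) Irep)) (.lab (.out 1 4)) (plug L (.par .nil Irep)) :=
  plug_lift (Step.parL stepM3) L

/-! ### Section F2: the closure relation for the weak equality of p and q -/

inductive C4 : Term → Term → Prop
  | refl {P : Term} : IsProc P → C4 P P
  | symm {P Q : Term} : C4 P Q → C4 Q P
  | assoc {X : Term} : IsProc X → C4 X (.par .nil X)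
  | junk {b c : Name} : b ≠ 3 → c ≠ 3 → C4 (Mb b) (Mb c)
  | basef {L : List (Bool × Term)} : SJL L →
      C4 (.par B345 (plug L Irep)) (.par B35 (plug L Irep))
  | cpar {L M P Q : Term} : C4 L M → C4 P Q → C4 (.par L P) (.par M Q)
  | cres {P Q : Term} (c : Name) : C4 P Q → C4 (.res c P) (.res c Q)

theorem C4_plug : ∀ (L : List (Bool × Term)), SJL L → ∀ {a b : Term}, C4 a b →
    C4 (plug L a) (plug L b) := by
  intro L
  induction L with
  | nil => intro _ a b h; exact h
  | cons p L ih =>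
    intro hL a b h
    obtain ⟨s, J⟩ := p
    obtain ⟨hJ, hL'⟩ := SJL_of_cons hL
    cases s
    · exact C4.cpar (ih hL' h) (C4.refl (SJ_closed hJ))
    · exact C4.cpar (C4.refl (SJ_closed hJ)) (ih hL' h)

theorem C4_proc {S T : Term} (h : C4 S T) : IsProc S ∧ IsProc T := by
  induction h with
  | refl h => exact ⟨h, h⟩
  | symm _ ih => exact ⟨ih.2, ih.1⟩
  | assoc h => exact ⟨h, closed_par_iff.2 ⟨closed_nil, h⟩⟩
  | junk _ _ => exact ⟨closed_Mb _, closed_Mb _⟩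
  | @basef L hL =>
    have := plug_closed hL closed_Irep
    exact ⟨closed_par_iff.2 ⟨closed_B345, this⟩, closed_par_iff.2 ⟨closed_B35, this⟩⟩
  | cpar _ _ ih1 ih2 =>
    exact ⟨closed_par_iff.2 ⟨ih1.1, ih2.1⟩, closed_par_iff.2 ⟨ih1.2, ih2.2⟩⟩
  | cres c _ ih => exact ⟨ih.1, ih.2⟩

theorem tauWeak_parR {A B B' : Term} (h : TauWeak B B') : TauWeak (.par A B) (.par A B') := by
  obtain ⟨B₀, h1, h2⟩ := h
  exact ⟨.par A B₀, Step.parR h1, weakTau_parR h2⟩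

theorem tauWeak_parL {A A' B : Term} (h : TauWeak A A') : TauWeak (.par A B) (.par A' B) := by
  obtain ⟨A₀, h1, h2⟩ := h
  exact ⟨.par A₀ B, Step.parL h1, weakTau_parL h2⟩

theorem tauWeak_res {c : Name} {A A' : Term} (h : TauWeak A A') :
    TauWeak (.res c A) (.res c A') := by
  obtain ⟨A₀, h1, h2⟩ := h
  exact ⟨.res c A₀, Step.resStep h1 (by simp [Act.names]), weakTau_res h2⟩

theorem tauWeak_single {A A' : Term} (h : Tau A A') : TauWeak A A' :=
  ⟨A', h, weakTau_refl _⟩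

theorem plug_shift (L : List (Bool × Term)) (hL : SJL L) (b : Name) :
    ∃ L', SJL L' ∧ plug L (.par (Mb b) Irep) = plug L' Irep :=
  ⟨L ++ [(true, Mb b)], SJL_append hL (SJL_cons (SJ.mb b) SJL_nil),
    by rw [plug_append]; rfl⟩

theorem basef' {X' : Term} (hX' : ∃ L', SJL L' ∧ X' = plug L' Irep) :
    C4 (.par B345 X') (.par B35 X') := by
  obtain ⟨L', hL', rfl⟩ := hX'
  exact C4.basef hL'

/-- The matching property: C4 is a (≥1-τ-answer) weak bisimulation for both
internal and visible actions. -/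
def Match4 (S T : Term) : Prop :=
    (∀ T', Tau T T' → ∃ S', TauWeak S S' ∧ C4 S' T') ∧
    (∀ S', Tau S S' → ∃ T', TauWeak T T' ∧ C4 S' T') ∧
    (∀ ℓ T', Step T (.lab ℓ) T' → ∃ S₁ S₂, WeakTau S S₁ ∧ Step S₁ (.lab ℓ) S₂ ∧ C4 S₂ T') ∧
    (∀ ℓ S', Step S (.lab ℓ) S' → ∃ T₁ T₂, WeakTau T T₁ ∧ Step T₁ (.lab ℓ) T₂ ∧ C4 S' T₂)

theorem match4_refl {P : Term} (hP : IsProc P) : Match4 P P := by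
  refine ⟨?_, ?_, ?_, ?_⟩
  · intro T' hT'
    exact ⟨T', tauWeak_single hT', C4.refl (step_closed hT' hP)⟩
  · intro S' hS'
    exact ⟨S', tauWeak_single hS', C4.refl (step_closed hS' hP)⟩
  · intro ℓ T' hT'
    exact ⟨P, T', weakTau_refl _, hT', C4.refl (step_closed hT' hP)⟩
  · intro ℓ S' hS'
    exact ⟨P, S', weakTau_refl _, hS', C4.refl (step_closed hS' hP)⟩

theorem match4_symm {P Q : Term} (h : Match4 P Q) : Match4 Q P := by
  obtain ⟨i1, i2, i3, i4⟩ := h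
  refine ⟨?_, ?_, ?_, ?_⟩
  · intro T' hT'
    obtain ⟨S', h1, h2⟩ := i2 T' hT'
    exact ⟨S', h1, h2.symm⟩
  · intro S' hS'
    obtain ⟨T', h1, h2⟩ := i1 S' hS'
    exact ⟨T', h1, h2.symm⟩
  · intro ℓ T' hT'
    obtain ⟨T₁, T₂, h1, h2, h3⟩ := i4 ℓ T' hT'
    exact ⟨T₁, T₂, h1, h2, h3.symm⟩
  · intro ℓ S' hS'
    obtain ⟨S₁, S₂, h1, h2, h3⟩ := i3 ℓ S' hS'
    exact ⟨S₁, S₂, h1, h2, h3.symm⟩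

theorem match4_assoc {X : Term} (hX : IsProc X) : Match4 X (.par .nil X) := by
  refine ⟨?_, ?_, ?_, ?_⟩
  · intro T' hT'
    rcases tau_par_inv hT' with ⟨X', h1, rfl⟩ | ⟨A', h1, _⟩ |
      ⟨a, b, A', B', h1, _, _⟩ | ⟨a, b, A', B', h1, _, _⟩ |
      ⟨a, c, A', B', h1, _, _⟩ | ⟨a, c, A', B', h1, _, _⟩
    · exact ⟨X', tauWeak_single h1, C4.assoc (step_closed h1 hX)⟩
    all_goals exact absurd h1 step_nil
  · intro S' hS'
    exact ⟨.par .nil S', tauWeak_single (Step.parR hS'), C4.assoc (step_closed hS' hX)⟩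
  · intro ℓ T' hT'
    rcases lab_par_inv hT' with ⟨X', h1, rfl⟩ | ⟨A', h1, _⟩
    · exact ⟨X, X', weakTau_refl _, h1, C4.assoc (step_closed h1 hX)⟩
    · exact absurd h1 step_nil
  · intro ℓ S' hS'
    exact ⟨.par .nil X, .par .nil S', weakTau_refl _, Step.parR hS',
      C4.assoc (step_closed hS' hX)⟩

theorem match4_junk {b c : Name} (hb : b ≠ 3) (hc : c ≠ 3) : Match4 (Mb b) (Mb c) := by
  refine ⟨?_, ?_, ?_, ?_⟩
  · intro T' hT'; exact absurd (stepMb_inv hT').1 hc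
  · intro S' hS'; exact absurd (stepMb_inv hS').1 hb
  · intro ℓ T' hT'; exact absurd (stepMb_inv hT').1 hc
  · intro ℓ S' hS'; exact absurd (stepMb_inv hS').1 hb

theorem match4_basef {L : List (Bool × Term)} (hL : SJL L) :
    Match4 (.par B345 (plug L Irep)) (.par B35 (plug L Irep)) := by
  have hX : Closed (plug L Irep) := plug_closed hL closed_Irep
  refine ⟨?_, ?_, ?_, ?_⟩
  · intro T' hT'
    rcases tau_par_inv hT' with ⟨X', h1, rfl⟩ | ⟨M', h1, _⟩ |
      ⟨a, b, M', X', h1, h2, rfl⟩ | ⟨a, b, M', X', h1, h2, rfl⟩ |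
      ⟨a, c, M', X', h1, h2, rfl⟩ | ⟨a, c, M', X', h1, h2, rfl⟩
    · refine ⟨.par B345 X', tauWeak_single (Step.parR h1), ?_⟩
      rcases plugX_inv L hL h1 with ⟨b, h2, _⟩ | ⟨h2, _⟩ | ⟨_, L'', hL2, rfl⟩
      · simp at h2
      · simp at h2
      · exact basef' (plug_shift L'' hL2 4)
    · obtain ⟨h2, _⟩ := stepB35_inv h1; rcases h2 with h2 | h2 <;> simp at h2
    · obtain ⟨h2, _⟩ := stepB35_inv h1; rcases h2 with h2 | h2 <;> simp at h2
    · obtain ⟨h3, hM'⟩ := stepB35_inv h1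
      subst hM'
      rcases h3 with h3 | h3
      · injection h3 with h3'; injection h3' with h4 h5
        subst h4; subst h5
        refine ⟨.par .nil X', tauWeak_single (Step.commR stepB345_3 h2), ?_⟩
        exact C4.refl (closed_par_iff.2 ⟨closed_nil, step_closed h2 hX⟩)
      · injection h3 with h3'; injection h3' with h4 h5
        subst h4; subst h5
        refine ⟨.par .nil X', tauWeak_single (Step.commR stepB345_5 h2), ?_⟩
        exact C4.refl (closed_par_iff.2 ⟨closed_nil, step_closed h2 hX⟩)
    · rcases plugX_inv L hL h2 with ⟨b', h3, _⟩ | ⟨h3, _⟩ | ⟨h3, _⟩ <;> simp at h3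
    · obtain ⟨h3, _⟩ := stepB35_inv h1; rcases h3 with h3 | h3 <;> simp at h3
  · intro S' hS'
    rcases tau_par_inv hS' with ⟨X', h1, rfl⟩ | ⟨M', h1, _⟩ |
      ⟨a, b, M', X', h1, h2, rfl⟩ | ⟨a, b, M', X', h1, h2, rfl⟩ |
      ⟨a, c, M', X', h1, h2, rfl⟩ | ⟨a, c, M', X', h1, h2, rfl⟩
    · refine ⟨.par B35 X', tauWeak_single (Step.parR h1), ?_⟩
      rcases plugX_inv L hL h1 with ⟨b, h2, _⟩ | ⟨h2, _⟩ | ⟨_, L'', hL2, rfl⟩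
      · simp at h2
      · simp at h2
      · exact basef' (plug_shift L'' hL2 4)
    · obtain ⟨h2, _⟩ := stepB345_inv h1; rcases h2 with h2 | h2 | h2 <;> simp at h2
    · obtain ⟨h2, _⟩ := stepB345_inv h1; rcases h2 with h2 | h2 | h2 <;> simp at h2
    · obtain ⟨h3, hM'⟩ := stepB345_inv h1
      subst hM'
      rcases plugX_inv L hL h2 with ⟨b', h4, hX'⟩ | ⟨h4, _⟩ | ⟨h4, _⟩
      · rcases h3 with h3 | h3 | h3
        · injection h3 with h3'; injection h3' with h5 h6
          subst h5; subst h6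
          refine ⟨.par .nil X', tauWeak_single (Step.commR stepB35_3 h2), ?_⟩
          exact C4.refl (closed_par_iff.2 ⟨closed_nil, step_closed h2 hX⟩)
        · injection h3 with h3'; injection h3' with h5 h6
          subst h5; subst h6
          injection h4 with h4'; injection h4' with h7 h8
          subst h8
          refine ⟨.par .nil (plug L (.par (Mb 5) Irep)),
            tauWeak_single (Step.commR stepB35_5 (plugX_inp L 5)), ?_⟩
          rw [hX']
          exact C4.cpar (C4.refl closed_nil)
            (C4_plug L hL (C4.cpar (C4.junk (by decide) (by decide)) (C4.refl closed_Irep)))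
        · injection h3 with h3'; injection h3' with h5 h6
          subst h5; subst h6
          refine ⟨.par .nil X', tauWeak_single (Step.commR stepB35_5 h2), ?_⟩
          exact C4.refl (closed_par_iff.2 ⟨closed_nil, step_closed h2 hX⟩)
      · simp at h4
      · simp at h4
    · rcases plugX_inv L hL h2 with ⟨b', h3, _⟩ | ⟨h3, _⟩ | ⟨h3, _⟩ <;> simp at h3
    · obtain ⟨h3, _⟩ := stepB345_inv h1; rcases h3 with h3 | h3 | h3 <;> simp at h3
  · intro ℓ T' hT'
    rcases lab_par_inv hT' with ⟨X', h1, rfl⟩ | ⟨M', h1, rfl⟩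
    · refine ⟨.par B345 (plug L Irep), .par B345 X', weakTau_refl _, Step.parR h1, ?_⟩
      rcases plugX_inv L hL h1 with ⟨b, _, rfl⟩ | ⟨_, L'', hL2, rfl⟩ | ⟨h2, _⟩
      · exact basef' (plug_shift L hL b)
      · exact basef' ⟨L'', hL2, rfl⟩
      · simp at h2
    · obtain ⟨h2, hM'⟩ := stepB35_inv h1
      subst hM'
      rcases h2 with h2 | h2
      · injection h2 with h2'
        subst h2'
        exact ⟨.par B345 (plug L Irep), .par .nil (plug L Irep), weakTau_refl _,
          Step.parL stepB345_3, C4.refl (closed_par_iff.2 ⟨closed_nil, hX⟩)⟩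
      · injection h2 with h2'
        subst h2'
        exact ⟨.par B345 (plug L Irep), .par .nil (plug L Irep), weakTau_refl _,
          Step.parL stepB345_5, C4.refl (closed_par_iff.2 ⟨closed_nil, hX⟩)⟩
  · intro ℓ S' hS'
    rcases lab_par_inv hS' with ⟨X', h1, rfl⟩ | ⟨M', h1, rfl⟩
    · refine ⟨.par B35 (plug L Irep), .par B35 X', weakTau_refl _, Step.parR h1, ?_⟩
      rcases plugX_inv L hL h1 with ⟨b, _, rfl⟩ | ⟨_, L'', hL2, rfl⟩ | ⟨h2, _⟩
      · exact basef' (plug_shift L hL b)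
      · exact basef' ⟨L'', hL2, rfl⟩
      · simp at h2
    · obtain ⟨h2, hM'⟩ := stepB345_inv h1
      subst hM'
      rcases h2 with h2 | h2 | h2
      · injection h2 with h2'
        subst h2'
        exact ⟨.par B35 (plug L Irep), .par .nil (plug L Irep), weakTau_refl _,
          Step.parL stepB35_3, C4.refl (closed_par_iff.2 ⟨closed_nil, hX⟩)⟩
      · injection h2 with h2'
        subst h2'
        refine ⟨.par .nil (plug L (.par (Mb 3) Irep)),
          .par .nil (plug L (.par .nil Irep)),
          weakTau_single (Step.commR stepB35_3 (plugX_inp L 3)),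
          Step.parR (plugX_out4 L), ?_⟩
        exact C4.cpar (C4.refl closed_nil) (C4_plug L hL (C4.assoc closed_Irep))
      · injection h2 with h2'
        subst h2'
        exact ⟨.par B35 (plug L Irep), .par .nil (plug L Irep), weakTau_refl _,
          Step.parL stepB35_5, C4.refl (closed_par_iff.2 ⟨closed_nil, hX⟩)⟩

theorem match4_cpar {L M P Q : Term} (hLM : C4 L M) (hPQ : C4 P Q)
    (ihLM : Match4 L M) (ihPQ : Match4 P Q) : Match4 (.par L P) (.par M Q) := by
  obtain ⟨iA1, iA2, iA3, iA4⟩ := ihLM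
  obtain ⟨iB1, iB2, iB3, iB4⟩ := ihPQ
  refine ⟨?_, ?_, ?_, ?_⟩
  · intro T' hT'
    rcases tau_par_inv hT' with ⟨Q', h1, rfl⟩ | ⟨M', h1, rfl⟩ |
      ⟨a, b, M', Q', h1, h2, rfl⟩ | ⟨a, b, M', Q', h1, h2, rfl⟩ |
      ⟨a, c, M', Q', h1, h2, rfl⟩ | ⟨a, c, M', Q', h1, h2, rfl⟩
    · obtain ⟨P', h2, h3⟩ := iB1 Q' h1
      exact ⟨.par L P', tauWeak_parR h2, C4.cpar hLM h3⟩
    · obtain ⟨L', h2, h3⟩ := iA1 M' h1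
      exact ⟨.par L' P, tauWeak_parL h2, C4.cpar h3 hPQ⟩
    · obtain ⟨L₁, L₂, w1, s1, c1⟩ := iA3 _ _ h1
      obtain ⟨P₁, P₂, w2, s2, c2⟩ := iB3 _ _ h2
      exact ⟨.par L₂ P₂, tauWeak_of_weakTau_tau (weakTau_par w1 w2) (Step.commL s1 s2),
        C4.cpar c1 c2⟩
    · obtain ⟨L₁, L₂, w1, s1, c1⟩ := iA3 _ _ h1
      obtain ⟨P₁, P₂, w2, s2, c2⟩ := iB3 _ _ h2
      exact ⟨.par L₂ P₂, tauWeak_of_weakTau_tau (weakTau_par w1 w2) (Step.commR s1 s2),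
        C4.cpar c1 c2⟩
    · obtain ⟨L₁, L₂, w1, s1, c1⟩ := iA3 _ _ h1
      obtain ⟨P₁, P₂, w2, s2, c2⟩ := iB3 _ _ h2
      exact ⟨.res c (.par L₂ P₂),
        tauWeak_of_weakTau_tau (weakTau_par w1 w2) (Step.closeL s1 s2),
        C4.cres c (C4.cpar c1 c2)⟩
    · obtain ⟨L₁, L₂, w1, s1, c1⟩ := iA3 _ _ h1
      obtain ⟨P₁, P₂, w2, s2, c2⟩ := iB3 _ _ h2
      exact ⟨.res c (.par L₂ P₂),
        tauWeak_of_weakTau_tau (weakTau_par w1 w2) (Step.closeR s1 s2),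
        C4.cres c (C4.cpar c1 c2)⟩
  · intro S' hS'
    rcases tau_par_inv hS' with ⟨P', h1, rfl⟩ | ⟨L', h1, rfl⟩ |
      ⟨a, b, L', P', h1, h2, rfl⟩ | ⟨a, b, L', P', h1, h2, rfl⟩ |
      ⟨a, c, L', P', h1, h2, rfl⟩ | ⟨a, c, L', P', h1, h2, rfl⟩
    · obtain ⟨Q', h2, h3⟩ := iB2 P' h1
      exact ⟨.par M Q', tauWeak_parR h2, C4.cpar hLM h3⟩
    · obtain ⟨M', h2, h3⟩ := iA2 L' h1
      exact ⟨.par M' Q, tauWeak_parL h2, C4.cpar h3 hPQ⟩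
    · obtain ⟨M₁, M₂, w1, s1, c1⟩ := iA4 _ _ h1
      obtain ⟨Q₁, Q₂, w2, s2, c2⟩ := iB4 _ _ h2
      exact ⟨.par M₂ Q₂, tauWeak_of_weakTau_tau (weakTau_par w1 w2) (Step.commL s1 s2),
        C4.cpar c1 c2⟩
    · obtain ⟨M₁, M₂, w1, s1, c1⟩ := iA4 _ _ h1
      obtain ⟨Q₁, Q₂, w2, s2, c2⟩ := iB4 _ _ h2
      exact ⟨.par M₂ Q₂, tauWeak_of_weakTau_tau (weakTau_par w1 w2) (Step.commR s1 s2),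
        C4.cpar c1 c2⟩
    · obtain ⟨M₁, M₂, w1, s1, c1⟩ := iA4 _ _ h1
      obtain ⟨Q₁, Q₂, w2, s2, c2⟩ := iB4 _ _ h2
      exact ⟨.res c (.par M₂ Q₂),
        tauWeak_of_weakTau_tau (weakTau_par w1 w2) (Step.closeL s1 s2),
        C4.cres c (C4.cpar c1 c2)⟩
    · obtain ⟨M₁, M₂, w1, s1, c1⟩ := iA4 _ _ h1
      obtain ⟨Q₁, Q₂, w2, s2, c2⟩ := iB4 _ _ h2
      exact ⟨.res c (.par M₂ Q₂),
        tauWeak_of_weakTau_tau (weakTau_par w1 w2) (Step.closeR s1 s2),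
        C4.cres c (C4.cpar c1 c2)⟩
  · intro ℓ T' hT'
    rcases lab_par_inv hT' with ⟨Q', h1, rfl⟩ | ⟨M', h1, rfl⟩
    · obtain ⟨P₁, P₂, w, s, cc⟩ := iB3 _ _ h1
      exact ⟨.par L P₁, .par L P₂, weakTau_parR w, Step.parR s, C4.cpar hLM cc⟩
    · obtain ⟨L₁, L₂, w, s, cc⟩ := iA3 _ _ h1
      exact ⟨.par L₁ P, .par L₂ P, weakTau_parL w, Step.parL s, C4.cpar cc hPQ⟩
  · intro ℓ S' hS'
    rcases lab_par_inv hS' with ⟨P', h1, rfl⟩ | ⟨L', h1, rfl⟩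
    · obtain ⟨Q₁, Q₂, w, s, cc⟩ := iB4 _ _ h1
      exact ⟨.par M Q₁, .par M Q₂, weakTau_parR w, Step.parR s, C4.cpar hLM cc⟩
    · obtain ⟨M₁, M₂, w, s, cc⟩ := iA4 _ _ h1
      exact ⟨.par M₁ Q, .par M₂ Q, weakTau_parL w, Step.parL s, C4.cpar cc hPQ⟩

theorem match4_cres {P Q : Term} (c : Name) (ih : Match4 P Q) :
    Match4 (.res c P) (.res c Q) := by
  obtain ⟨i1, i2, i3, i4⟩ := ih
  refine ⟨?_, ?_, ?_, ?_⟩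
  · intro T' hT'
    obtain ⟨Q', h1, rfl⟩ := tau_res_inv hT'
    obtain ⟨P', h2, h3⟩ := i1 Q' h1
    exact ⟨.res c P', tauWeak_res h2, C4.cres c h3⟩
  · intro S' hS'
    obtain ⟨P', h1, rfl⟩ := tau_res_inv hS'
    obtain ⟨Q', h2, h3⟩ := i2 P' h1
    exact ⟨.res c Q', tauWeak_res h2, C4.cres c h3⟩
  · intro ℓ T' hT'
    rcases lab_res_inv hT' with ⟨Q', h1, rfl, hn⟩ | ⟨a, Q', rfl, h1, rfl⟩
    · obtain ⟨P₁, P₂, w, s, cc⟩ := i3 _ _ h1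
      exact ⟨.res c P₁, .res c P₂, weakTau_res w, Step.resStep s hn, C4.cres c cc⟩
    · obtain ⟨P₁, P₂, w, s, cc⟩ := i3 _ _ h1
      exact ⟨.res c P₁, P₂, weakTau_res w, Step.open_ s, cc⟩
  · intro ℓ S' hS'
    rcases lab_res_inv hS' with ⟨P', h1, rfl, hn⟩ | ⟨a, P', rfl, h1, rfl⟩
    · obtain ⟨Q₁, Q₂, w, s, cc⟩ := i4 _ _ h1
      exact ⟨.res c Q₁, .res c Q₂, weakTau_res w, Step.resStep s hn, C4.cres c cc⟩
    · obtain ⟨Q₁, Q₂, w, s, cc⟩ := i4 _ _ h1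
      exact ⟨.res c Q₁, Q₂, weakTau_res w, Step.open_ s, cc⟩

theorem inv4 {S T : Term} (h : C4 S T) : Match4 S T := by
  induction h with
  | refl h => exact match4_refl h
  | symm _ ih => exact match4_symm ih
  | assoc h => exact match4_assoc h
  | junk hb hc => exact match4_junk hb hc
  | basef hL => exact match4_basef hL
  | cpar h1 h2 ih1 ih2 => exact match4_cpar h1 h2 ih1 ih2
  | cres c _ ih => exact match4_cres c ih

theorem obs4 : ∀ {T T₀ : Term}, WeakTau T T₀ → ∀ {ℓ : Label} {T₁ : Term},
    Step T₀ (.lab ℓ) T₁ → ∀ {S : Term}, C4 S T → Obs S := by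
  intro T T₀ hw
  induction hw using Relation.ReflTransGen.head_induction_on with
  | refl =>
    intro ℓ T₁ hstep S hc
    obtain ⟨S₁, S₂, h1, h2, _⟩ := (inv4 hc).2.2.1 ℓ T₁ hstep
    exact ⟨S₁, ℓ, S₂, h1, h2⟩
  | head hT hw ih =>
    intro ℓ T₁ hstep S hc
    obtain ⟨S', h1, h2⟩ := (inv4 hc).1 _ hT
    exact obs_head (tauWeak_to_weakTau h1) (ih hstep h2)

theorem goodWeak4 : GoodWeak C4 := by
  refine ⟨?_, ?_, ?_, ⟨?_, ?_⟩, ?_, ?_⟩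
  · intro P Q h; exact C4_proc h
  · intro P hP; exact C4.refl hP
  · intro S T hc
    constructor
    · rintro ⟨S₀, ℓ, S₁, hw, hstep⟩
      exact obs4 hw hstep hc.symm
    · rintro ⟨T₀, ℓ, T₁, hw, hstep⟩
      exact obs4 hw hstep hc
  · intro L M P Q h1 h2; exact C4.cpar h1 h2
  · intro P Q c h; exact C4.cres c h
  · intro P Q h
    constructor
    · intro f hf0 hfs
      have hstep : Tau Q (f 1) := by rw [← hf0]; exact hfs 0
      obtain ⟨P', h1, h2⟩ := (inv4 h).1 (f 1) hstep
      exact ⟨1, le_refl 1, P', h1, h2⟩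
    · intro f hf0 hfs
      have hstep : Tau P (f 1) := by rw [← hf0]; exact hfs 0
      obtain ⟨Q', h1, h2⟩ := (inv4 h).2.1 (f 1) hstep
      exact ⟨1, le_refl 1, Q', h1, h2.symm⟩
  · intro P Q h
    constructor
    · intro Q' hQ'
      obtain ⟨P', h1, h2⟩ := (inv4 h).1 Q' hQ'
      exact ⟨P', tauWeak_to_weakTau h1, h2⟩
    · intro P' hP'
      obtain ⟨Q', h1, h2⟩ := (inv4 h).2.1 P' hP'
      exact ⟨Q', tauWeak_to_weakTau h1, h2⟩

theorem C4_pT_qT : C4 pT qT := C4.basef SJL_nil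

theorem weakEq_pT_qT : WeakEq pT qT := ⟨C4, goodWeak4, C4_pT_qT⟩

/-! ### Section G1: the tester u(x).[x=4]Ω and divergence machinery -/

abbrev MC (b : Name) : Term := .mat (.nm b) (.nm 4) (wom 0)
abbrev Cq : Term := .inp (.nm 1) 0 1 (fun _ => .mat (.vr 0) (.nm 4) (wom 0))

example : (Term.mat (.vr 0) (.nm 4) (wom 0)).subst1 0 7 = MC 7 := rfl

theorem closed_Cq : Closed Cq := by
  have h9 := closed_wom 0
  simp only [Closed] at h9
  simp [Closed, Term.fvar, NV.vars, h9]

theorem stepCq (b : Name) : Step Cq (.lab (.inp 1 b)) (MC b) := Step.inp 0 b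

theorem step_Cq_inv {μ : Act} {Z : Term} (h : Step Cq μ Z) :
    ∃ b, μ = .lab (.inp 1 b) ∧ Z = MC b := by
  obtain ⟨i, c, hμ, hZ⟩ := step_inp_inv h
  exact ⟨c, hμ, hZ⟩

theorem step_MC4_inv {μ : Act} {Z : Term} (h : Step (MC 4) μ Z) :
    μ = .tau ∧ Z = wom 1 := by
  obtain ⟨_, h2⟩ := step_mat_inv h
  exact step_wom_inv h2

theorem step_MC_ne {b : Name} (hb : b ≠ 4) {μ : Act} {Z : Term} :
    ¬ Step (MC b) μ Z := step_mat_ne hb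

/-- The canonical divergent sequence [x=4]Ω —τ→ Ω₁ —τ→ Ω₂ —τ→ ⋯ -/
def mcseq : ℕ → Term
  | 0 => MC 4
  | n + 1 => wom (n + 1)

theorem tau_mcseq (n : ℕ) : Tau (mcseq n) (mcseq (n + 1)) := by
  cases n with
  | zero => exact Step.matStep (tau_wom 0)
  | succ n => exact tau_wom (n + 1)

theorem step_mcseq_inv {n : ℕ} {μ : Act} {Z : Term} (h : Step (mcseq n) μ Z) :
    μ = .tau ∧ Z = mcseq (n + 1) := by
  cases n with
  | zero => exact step_MC4_inv h
  | succ n => exact step_wom_inv h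

/-- Terms which can only perform input actions (hence no τ and no outputs). -/
def InOnly (t : Term) : Prop := ∀ {μ : Act} {Z : Term}, Step t μ Z → ∃ a b, μ = .lab (.inp a b)

theorem inOnly_nil : InOnly .nil := fun h => absurd h step_nil

theorem inOnly_Irep : InOnly Irep := by
  intro μ Z h
  obtain ⟨b, h1, _⟩ := stepIrep_inv h
  exact ⟨1, b, h1⟩

theorem inOnly_Cq : InOnly Cq := by
  intro μ Z h
  obtain ⟨b, h1, _⟩ := step_Cq_inv h
  exact ⟨1, b, h1⟩

theorem inOnly_Mb {b : Name} (hb : b ≠ 3) : InOnly (Mb b) :=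
  fun h => absurd (stepMb_inv h).1 hb

theorem inOnly_MC {b : Name} (hb : b ≠ 4) : InOnly (MC b) :=
  fun h => absurd h (step_MC_ne hb)

theorem inOnly_par {A B : Term} (hA : InOnly A) (hB : InOnly B) : InOnly (.par A B) := by
  intro μ Z h
  cases h with
  | parR h => exact hB h
  | parL h => exact hA h
  | commL h1 h2 => obtain ⟨a, b, h3⟩ := hB h2; simp at h3
  | commR h1 h2 => obtain ⟨a, b, h3⟩ := hA h1; simp at h3
  | closeL h1 h2 => obtain ⟨a, b, h3⟩ := hB h2; simp at h3
  | closeR h1 h2 => obtain ⟨a, b, h3⟩ := hA h1; simp at h3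

theorem noTau_of_inOnly {t : Term} (h : InOnly t) {Z : Term} : ¬ Tau t Z := by
  intro hτ
  obtain ⟨a, b, h1⟩ := h hτ
  simp at h1

/-- Divergence: an infinite internal run. -/
def Run (X : Term) : Prop := ∃ f : ℕ → Term, f 0 = X ∧ TauSeq f

def DivClosed (X : Term) : Prop := ∀ Z, WeakTau X Z → Run Z

def AccT (t : Term) : Prop := Acc (fun a b => Tau b a) t

theorem accT_of_noTau {t : Term} (h : ∀ Z, ¬ Tau t Z) : AccT t :=
  Acc.intro t (fun y hy => absurd hy (h y))

theorem accT_of_inOnly {t : Term} (h : InOnly t) : AccT t :=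
  accT_of_noTau (fun _ => noTau_of_inOnly h)

theorem accT_step {t : Term} (h : ∀ Z, Tau t Z → AccT Z) : AccT t :=
  Acc.intro t (fun y hy => h y hy)

/-- The family A | mcseqₙ of divergent states over an input-only part A. -/
def Fam (A : Term) (n : ℕ) : Term := .par A (mcseq n)

theorem tau_Fam (A : Term) (n : ℕ) : Tau (Fam A n) (Fam A (n + 1)) :=
  Step.parR (tau_mcseq n)

theorem tau_Fam_inv {A : Term} (hA : InOnly A) {n : ℕ} {Z : Term}
    (h : Tau (Fam A n) Z) : Z = Fam A (n + 1) := by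
  rcases tau_par_inv h with ⟨B', h1, rfl⟩ | ⟨A', h1, _⟩ |
    ⟨a, b, A', B', h1, h2, _⟩ | ⟨a, b, A', B', h1, h2, _⟩ |
    ⟨a, c, A', B', h1, h2, _⟩ | ⟨a, c, A', B', h1, h2, _⟩
  · obtain ⟨_, h2⟩ := step_mcseq_inv h1
    rw [h2]; rfl
  · exact absurd h1 (noTau_of_inOnly hA)
  · have := (step_mcseq_inv h2).1; simp at this
  · obtain ⟨a', b', h3⟩ := hA h1; simp at h3
  · have := (step_mcseq_inv h2).1; simp at this
  · obtain ⟨a', b', h3⟩ := hA h1; simp at h3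

theorem run_Fam (A : Term) (n : ℕ) : Run (Fam A n) :=
  ⟨fun i => Fam A (n + i), rfl, fun i => by
    show Tau (Fam A (n + i)) (Fam A (n + (i + 1)))
    rw [Nat.add_succ]
    exact tau_Fam A (n + i)⟩

theorem reach_Fam {A : Term} (hA : InOnly A) {n : ℕ} {Z : Term}
    (h : WeakTau (Fam A n) Z) : ∃ m, Z = Fam A m := by
  induction h with
  | refl => exact ⟨n, rfl⟩
  | tail _ h ih =>
    obtain ⟨m, rfl⟩ := ih
    exact ⟨m + 1, tau_Fam_inv hA h⟩

theorem divClosed_Fam {A : Term} (hA : InOnly A) (n : ℕ) : DivClosed (Fam A n) := by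
  intro Z hZ
  obtain ⟨m, rfl⟩ := reach_Fam hA hZ
  exact run_Fam A m

/-- Extra nil-wrapped variant: (A|mcseqₙ)|0. -/
theorem step_parnilR_inv {A : Term} {μ : Act} {Z : Term} (h : Step (.par A .nil) μ Z) :
    ∃ A', Step A μ A' ∧ Z = .par A' .nil := by
  cases h with
  | parR h => exact absurd h step_nil
  | parL h => exact ⟨_, h, rfl⟩
  | commL _ h2 => exact absurd h2 step_nil
  | commR _ h2 => exact absurd h2 step_nil
  | closeL _ h2 => exact absurd h2 step_nil
  | closeR _ h2 => exact absurd h2 step_nil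

def FamN (A : Term) (n : ℕ) : Term := .par (Fam A n) .nil

theorem tau_FamN (A : Term) (n : ℕ) : Tau (FamN A n) (FamN A (n + 1)) :=
  Step.parL (tau_Fam A n)

theorem run_FamN (A : Term) (n : ℕ) : Run (FamN A n) :=
  ⟨fun i => FamN A (n + i), rfl, fun i => by
    show Tau (FamN A (n + i)) (FamN A (n + (i + 1)))
    rw [Nat.add_succ]
    exact tau_FamN A (n + i)⟩

theorem reach_FamN {A : Term} (hA : InOnly A) {n : ℕ} {Z : Term}
    (h : WeakTau (FamN A n) Z) : ∃ m, Z = FamN A m := by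
  induction h with
  | refl => exact ⟨n, rfl⟩
  | tail _ h ih =>
    obtain ⟨m, rfl⟩ := ih
    obtain ⟨A', h1, h2⟩ := step_parnilR_inv h
    rw [h2, tau_Fam_inv hA h1]
    exact ⟨m + 1, rfl⟩

theorem divClosed_FamN {A : Term} (hA : InOnly A) (n : ℕ) : DivClosed (FamN A n) := by
  intro Z hZ
  obtain ⟨m, rfl⟩ := reach_FamN hA hZ
  exact run_FamN A m

theorem run_shift {f : ℕ → Term} (hf : TauSeq f) (k : ℕ) : Run (f k) :=
  ⟨fun i => f (k + i), rfl, fun i => by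
    show Tau (f (k + i)) (f (k + (i + 1)))
    rw [Nat.add_succ]
    exact hf (k + i)⟩

theorem reach_noTau {t : Term} (h : ∀ Z, ¬ Tau t Z) {Z : Term} (hw : WeakTau t Z) :
    Z = t := by
  induction hw with
  | refl => rfl
  | tail hw h2 ih => rw [ih] at h2; exact absurd h2 (h _)

/-! ### Section G2: the game states for the non-absolute-equality proof -/

abbrev PC : Term := .par pT Cq
abbrev QC : Term := .par qT Cq
abbrev LY1 : Term := .par .nil (.par (Mb 3) Irep)
abbrev Y1 : Term := .par LY1 Cq
abbrev Y2 : Term := .par (.par .nil (.par (Mb 5) Irep)) Cq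
abbrev Z4i : Term := .par (.par .nil (.par (Mb 4) Irep)) Cq
abbrev W0 : Term := .par (.par .nil Irep) (MC 3)
abbrev Y4 : Term := .par (.par .nil Irep) (MC 5)
abbrev J5 : Term := .par .nil (.par .nil (.par (Mb 4) Irep))
abbrev Y5 : Term := .par J5 Cq
abbrev L6 : Term := .par .nil (.par .nil Irep)
abbrev AX0 : Term := .par .nil Irep

theorem inOnly_AX0 : InOnly AX0 := inOnly_par inOnly_nil inOnly_Irep
theorem inOnly_L6 : InOnly L6 := inOnly_par inOnly_nil (inOnly_par inOnly_nil inOnly_Irep)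
theorem inOnly_J5 : InOnly J5 :=
  inOnly_par inOnly_nil (inOnly_par inOnly_nil
    (inOnly_par (inOnly_Mb (by decide)) inOnly_Irep))
theorem inOnly_W0 : InOnly W0 := inOnly_par inOnly_AX0 (inOnly_MC (by decide))
theorem inOnly_Y4 : InOnly Y4 := inOnly_par inOnly_AX0 (inOnly_MC (by decide))
theorem inOnly_Y2 : InOnly Y2 :=
  inOnly_par (inOnly_par inOnly_nil (inOnly_par (inOnly_Mb (by decide)) inOnly_Irep))
    inOnly_Cq
theorem inOnly_Z4i : InOnly Z4i :=
  inOnly_par (inOnly_par inOnly_nil (inOnly_par (inOnly_Mb (by decide)) inOnly_Irep))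
    inOnly_Cq
theorem inOnly_Y5 : InOnly Y5 := inOnly_par inOnly_J5 inOnly_Cq

/-- Constructions of the needed internal steps. -/
theorem tau_PC_W0 : Tau PC W0 := Step.commR (Step.parL stepB345_3) (stepCq 3)
theorem tau_PC_X0 : Tau PC (Fam AX0 0) := Step.commR (Step.parL stepB345_4) (stepCq 4)
theorem tau_PC_Y2 : Tau PC Y2 := Step.parL (Step.commR stepB345_5 (stepIrep 5))
theorem tau_QC_Y2 : Tau QC Y2 := Step.parL (Step.commR stepB35_5 (stepIrep 5))
theorem tau_Y1_Y5 : Tau Y1 Y5 :=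
  Step.parL (Step.parR (Step.commR stepM3 (stepIrep 4)))

/-- Inversion of the visible actions of p and q. -/
theorem step_pT_inv {μ : Act} {Z : Term} (h : Step pT μ Z) :
    (∃ b, μ = .lab (.inp 1 b) ∧ Z = .par B345 (.par (Mb b) Irep)) ∨
    (∃ b, (b = 3 ∨ b = 4 ∨ b = 5) ∧ μ = .lab (.out 1 b) ∧ Z = .par .nil Irep) ∨
    (∃ b, (b = 3 ∨ b = 4 ∨ b = 5) ∧ μ = .tau ∧ Z = .par .nil (.par (Mb b) Irep)) := by
  cases h with
  | parR h =>
    obtain ⟨b, h1, h2⟩ := stepIrep_inv h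
    exact Or.inl ⟨b, h1, by rw [h2]⟩
  | parL h =>
    obtain ⟨h1, h2⟩ := stepB345_inv h
    subst h2
    rcases h1 with h1 | h1 | h1
    · exact Or.inr (Or.inl ⟨3, Or.inl rfl, h1, rfl⟩)
    · exact Or.inr (Or.inl ⟨4, Or.inr (Or.inl rfl), h1, rfl⟩)
    · exact Or.inr (Or.inl ⟨5, Or.inr (Or.inr rfl), h1, rfl⟩)
  | commL h1 h2 =>
    obtain ⟨h3, _⟩ := stepB345_inv h1
    rcases h3 with h3 | h3 | h3 <;> simp at h3
  | commR h1 h2 =>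
    obtain ⟨h3, h4⟩ := stepB345_inv h1
    subst h4
    obtain ⟨b', h5, h6⟩ := stepIrep_inv h2
    subst h6
    rcases h3 with h3 | h3 | h3 <;>
      (injection h3 with h3'; injection h3' with ha hb; subst ha; subst hb) <;>
      (injection h5 with h5'; injection h5' with ha' hb'; subst hb')
    · exact Or.inr (Or.inr ⟨3, Or.inl rfl, rfl, rfl⟩)
    · exact Or.inr (Or.inr ⟨4, Or.inr (Or.inl rfl), rfl, rfl⟩)
    · exact Or.inr (Or.inr ⟨5, Or.inr (Or.inr rfl), rfl, rfl⟩)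
  | closeL h1 h2 =>
    obtain ⟨h3, _⟩ := stepB345_inv h1
    rcases h3 with h3 | h3 | h3 <;> simp at h3
  | closeR h1 h2 =>
    obtain ⟨h3, _⟩ := stepB345_inv h1
    rcases h3 with h3 | h3 | h3 <;> simp at h3

theorem step_qT_inv {μ : Act} {Z : Term} (h : Step qT μ Z) :
    (∃ b, μ = .lab (.inp 1 b) ∧ Z = .par B35 (.par (Mb b) Irep)) ∨
    (∃ b, (b = 3 ∨ b = 5) ∧ μ = .lab (.out 1 b) ∧ Z = .par .nil Irep) ∨
    (∃ b, (b = 3 ∨ b = 5) ∧ μ = .tau ∧ Z = .par .nil (.par (Mb b) Irep)) := by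
  cases h with
  | parR h =>
    obtain ⟨b, h1, h2⟩ := stepIrep_inv h
    exact Or.inl ⟨b, h1, by rw [h2]⟩
  | parL h =>
    obtain ⟨h1, h2⟩ := stepB35_inv h
    subst h2
    rcases h1 with h1 | h1
    · exact Or.inr (Or.inl ⟨3, Or.inl rfl, h1, rfl⟩)
    · exact Or.inr (Or.inl ⟨5, Or.inr rfl, h1, rfl⟩)
  | commL h1 h2 =>
    obtain ⟨h3, _⟩ := stepB35_inv h1
    rcases h3 with h3 | h3 <;> simp at h3
  | commR h1 h2 =>
    obtain ⟨h3, h4⟩ := stepB35_inv h1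
    subst h4
    obtain ⟨b', h5, h6⟩ := stepIrep_inv h2
    subst h6
    rcases h3 with h3 | h3 <;>
      (injection h3 with h3'; injection h3' with ha hb; subst ha; subst hb) <;>
      (injection h5 with h5'; injection h5' with ha' hb'; subst hb')
    · exact Or.inr (Or.inr ⟨3, Or.inl rfl, rfl, rfl⟩)
    · exact Or.inr (Or.inr ⟨5, Or.inr rfl, rfl, rfl⟩)
  | closeL h1 h2 =>
    obtain ⟨h3, _⟩ := stepB35_inv h1
    rcases h3 with h3 | h3 <;> simp at h3
  | closeR h1 h2 =>
    obtain ⟨h3, _⟩ := stepB35_inv h1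
    rcases h3 with h3 | h3 <;> simp at h3

theorem step_LY1_inv {μ : Act} {Z : Term} (h : Step LY1 μ Z) :
    (μ = .lab (.out 1 4) ∧ Z = L6) ∨
    (∃ b, μ = .lab (.inp 1 b) ∧ Z = .par .nil (.par (Mb 3) (.par (Mb b) Irep))) ∨
    (μ = .tau ∧ Z = J5) := by
  cases h with
  | parL h => exact absurd h step_nil
  | commL h1 _ => exact absurd h1 step_nil
  | commR h1 _ => exact absurd h1 step_nil
  | closeL h1 _ => exact absurd h1 step_nil
  | closeR h1 _ => exact absurd h1 step_nil
  | parR h =>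
    cases h with
    | parL h =>
      obtain ⟨_, h1, h2⟩ := stepMb_inv h
      subst h2
      exact Or.inl ⟨h1, rfl⟩
    | parR h =>
      obtain ⟨b, h1, h2⟩ := stepIrep_inv h
      subst h2
      exact Or.inr (Or.inl ⟨b, h1, rfl⟩)
    | commL h1 h2 =>
      obtain ⟨_, h3, _⟩ := stepMb_inv h1
      simp at h3
    | commR h1 h2 =>
      obtain ⟨_, h3, h4⟩ := stepMb_inv h1
      subst h4
      obtain ⟨b, h5, h6⟩ := stepIrep_inv h2
      subst h6
      injection h3 with h3'; injection h3' with ha hb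
      subst ha; subst hb
      injection h5 with h5'; injection h5' with ha' hb'
      subst hb'
      exact Or.inr (Or.inr ⟨rfl, rfl⟩)
    | closeL h1 h2 =>
      obtain ⟨_, h3, _⟩ := stepMb_inv h1
      simp at h3
    | closeR h1 h2 =>
      obtain ⟨_, h3, _⟩ := stepMb_inv h1
      simp at h3

theorem E_PC {Z : Term} (h : Tau PC Z) :
    Z = Y1 ∨ Z = Z4i ∨ Z = Y2 ∨ Z = W0 ∨ Z = Fam AX0 0 ∨ Z = Y4 := by
  rcases tau_par_inv h with ⟨C', h1, rfl⟩ | ⟨p', h1, rfl⟩ |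
    ⟨a, b, p', C', h1, h2, rfl⟩ | ⟨a, b, p', C', h1, h2, rfl⟩ |
    ⟨a, c, p', C', h1, h2, rfl⟩ | ⟨a, c, p', C', h1, h2, rfl⟩
  · exact absurd h1 (noTau_of_inOnly inOnly_Cq)
  · rcases step_pT_inv h1 with ⟨b, h2, _⟩ | ⟨b, _, h2, _⟩ | ⟨b, hb, _, rfl⟩
    · simp at h2
    · simp at h2
    · rcases hb with rfl | rfl | rfl
      · exact Or.inl rfl
      · exact Or.inr (Or.inl rfl)
      · exact Or.inr (Or.inr (Or.inl rfl))
  · obtain ⟨b', h3, _⟩ := step_Cq_inv h2; simp at h3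
  · rcases step_pT_inv h1 with ⟨b', h3, _⟩ | ⟨b', hb, h3, rfl⟩ | ⟨b', _, h3, _⟩
    · simp at h3
    · obtain ⟨b'', h4, rfl⟩ := step_Cq_inv h2
      injection h3 with h3'; injection h3' with ha hb'
      subst ha; subst hb'
      injection h4 with h4'; injection h4' with ha' hb''
      subst hb''
      rcases hb with rfl | rfl | rfl
      · exact Or.inr (Or.inr (Or.inr (Or.inl rfl)))
      · exact Or.inr (Or.inr (Or.inr (Or.inr (Or.inl rfl))))
      · exact Or.inr (Or.inr (Or.inr (Or.inr (Or.inr rfl))))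
    · simp at h3
  · obtain ⟨b', h3, _⟩ := step_Cq_inv h2; simp at h3
  · rcases step_pT_inv h1 with ⟨b', h3, _⟩ | ⟨b', _, h3, _⟩ | ⟨b', _, h3, _⟩ <;> simp at h3

theorem E_QC {Z : Term} (h : Tau QC Z) :
    Z = Y1 ∨ Z = Y2 ∨ Z = W0 ∨ Z = Y4 := by
  rcases tau_par_inv h with ⟨C', h1, rfl⟩ | ⟨q', h1, rfl⟩ |
    ⟨a, b, q', C', h1, h2, rfl⟩ | ⟨a, b, q', C', h1, h2, rfl⟩ |
    ⟨a, c, q', C', h1, h2, rfl⟩ | ⟨a, c, q', C', h1, h2, rfl⟩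
  · exact absurd h1 (noTau_of_inOnly inOnly_Cq)
  · rcases step_qT_inv h1 with ⟨b, h2, _⟩ | ⟨b, _, h2, _⟩ | ⟨b, hb, _, rfl⟩
    · simp at h2
    · simp at h2
    · rcases hb with rfl | rfl
      · exact Or.inl rfl
      · exact Or.inr (Or.inl rfl)
  · obtain ⟨b', h3, _⟩ := step_Cq_inv h2; simp at h3
  · rcases step_qT_inv h1 with ⟨b', h3, _⟩ | ⟨b', hb, h3, rfl⟩ | ⟨b', _, h3, _⟩
    · simp at h3
    · obtain ⟨b'', h4, rfl⟩ := step_Cq_inv h2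
      injection h3 with h3'; injection h3' with ha hb'
      subst ha; subst hb'
      injection h4 with h4'; injection h4' with ha' hb''
      subst hb''
      rcases hb with rfl | rfl
      · exact Or.inr (Or.inr (Or.inl rfl))
      · exact Or.inr (Or.inr (Or.inr rfl))
    · simp at h3
  · obtain ⟨b', h3, _⟩ := step_Cq_inv h2; simp at h3
  · rcases step_qT_inv h1 with ⟨b', h3, _⟩ | ⟨b', _, h3, _⟩ | ⟨b', _, h3, _⟩ <;> simp at h3

theorem E_Y1 {Z : Term} (h : Tau Y1 Z) : Z = Y5 ∨ Z = Fam L6 0 := by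
  rcases tau_par_inv h with ⟨C', h1, rfl⟩ | ⟨l', h1, rfl⟩ |
    ⟨a, b, l', C', h1, h2, rfl⟩ | ⟨a, b, l', C', h1, h2, rfl⟩ |
    ⟨a, c, l', C', h1, h2, rfl⟩ | ⟨a, c, l', C', h1, h2, rfl⟩
  · exact absurd h1 (noTau_of_inOnly inOnly_Cq)
  · rcases step_LY1_inv h1 with ⟨h2, _⟩ | ⟨b, h2, _⟩ | ⟨_, rfl⟩
    · simp at h2
    · simp at h2
    · exact Or.inl rfl
  · obtain ⟨b', h3, _⟩ := step_Cq_inv h2; simp at h3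
  · rcases step_LY1_inv h1 with ⟨h3, rfl⟩ | ⟨b', h3, _⟩ | ⟨h3, _⟩
    · obtain ⟨b'', h4, rfl⟩ := step_Cq_inv h2
      injection h3 with h3'; injection h3' with ha hb'
      subst ha; subst hb'
      injection h4 with h4'; injection h4' with ha' hb''
      subst hb''
      exact Or.inr rfl
    · simp at h3
    · simp at h3
  · obtain ⟨b', h3, _⟩ := step_Cq_inv h2; simp at h3
  · rcases step_LY1_inv h1 with ⟨h3, _⟩ | ⟨b', h3, _⟩ | ⟨h3, _⟩ <;> simp at h3

theorem reach_QC {Z : Term} (h : WeakTau QC Z) :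
    Z = QC ∨ Z = Y1 ∨ Z = Y2 ∨ Z = W0 ∨ Z = Y4 ∨ Z = Y5 ∨ ∃ m, Z = Fam L6 m := by
  induction h with
  | refl => exact Or.inl rfl
  | tail _ h ih =>
    rcases ih with rfl | rfl | rfl | rfl | rfl | rfl | ⟨m, rfl⟩
    · rcases E_QC h with rfl | rfl | rfl | rfl
      · exact Or.inr (Or.inl rfl)
      · exact Or.inr (Or.inr (Or.inl rfl))
      · exact Or.inr (Or.inr (Or.inr (Or.inl rfl)))
      · exact Or.inr (Or.inr (Or.inr (Or.inr (Or.inl rfl))))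
    · rcases E_Y1 h with rfl | rfl
      · exact Or.inr (Or.inr (Or.inr (Or.inr (Or.inr (Or.inl rfl)))))
      · exact Or.inr (Or.inr (Or.inr (Or.inr (Or.inr (Or.inr ⟨0, rfl⟩)))))
    · exact absurd h (noTau_of_inOnly inOnly_Y2)
    · exact absurd h (noTau_of_inOnly inOnly_W0)
    · exact absurd h (noTau_of_inOnly inOnly_Y4)
    · exact absurd h (noTau_of_inOnly inOnly_Y5)
    · rw [tau_Fam_inv inOnly_L6 h]
      exact Or.inr (Or.inr (Or.inr (Or.inr (Or.inr (Or.inr ⟨m + 1, rfl⟩)))))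

theorem reach_Y1 {Z : Term} (h : WeakTau Y1 Z) :
    Z = Y1 ∨ Z = Y5 ∨ ∃ m, Z = Fam L6 m := by
  induction h with
  | refl => exact Or.inl rfl
  | tail _ h ih =>
    rcases ih with rfl | rfl | ⟨m, rfl⟩
    · rcases E_Y1 h with rfl | rfl
      · exact Or.inr (Or.inl rfl)
      · exact Or.inr (Or.inr ⟨0, rfl⟩)
    · exact absurd h (noTau_of_inOnly inOnly_Y5)
    · rw [tau_Fam_inv inOnly_L6 h]
      exact Or.inr (Or.inr ⟨m + 1, rfl⟩)

/-! ### Section G3: refutation machinery against an arbitrary GoodAbs relation -/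

section Refutations

variable {R : PRel}

/-- A τ-accessible (strongly normalizing) state can never be related by a
good codivergent relation to a divergent state. -/
theorem L1 (hGA : GoodAbs R) : ∀ {Z : Term}, AccT Z → ∀ {Z'' : Term}, WeakTau Z Z'' →
    ∀ {X : Term}, Run X → ¬ R Z'' X ∧ ¬ R X Z'' := by
  have hcod : Codivergent R := hGA.2.2.2.2.1
  intro Z hAcc
  induction hAcc with
  | intro Z hsucc ih =>
    intro Z'' hw X hX
    obtain ⟨f, hf0, hfs⟩ := hX
    constructor
    · intro hRZX
      rcases Relation.ReflTransGen.cases_head hw with rfl | ⟨Z₁, h1, h2⟩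
      · obtain ⟨k, hk, P', ⟨W, hτ, hwWP⟩, hRP⟩ := (hcod _ _ hRZX).1 f hf0 hfs
        exact (ih W hτ hwWP (run_shift hfs k)).1 hRP
      · exact (ih Z₁ h1 h2 ⟨f, hf0, hfs⟩).1 hRZX
    · intro hRXZ
      rcases Relation.ReflTransGen.cases_head hw with rfl | ⟨Z₁, h1, h2⟩
      · obtain ⟨k, hk, Q', ⟨W, hτ, hwWQ⟩, hRQ⟩ := (hcod _ _ hRXZ).2 f hf0 hfs
        exact (ih W hτ hwWQ (run_shift hfs k)).1 hRQ
      · exact (ih Z₁ h1 h2 ⟨f, hf0, hfs⟩).2 hRXZ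

theorem notR_acc_run (hGA : GoodAbs R) {A X : Term} (hAcc : AccT A) (hX : Run X) : ¬ R A X ∧ ¬ R X A :=
  L1 hGA hAcc (weakTau_refl A) hX

/-- An accessible state cannot be related to a state with a τ-step into a
divergent state. -/
theorem notR_acc_candiv (hGA : GoodAbs R) {A B V : Term} (hAcc : AccT A) (hτ : Tau B V) (hV : Run V) :
    ¬ R A B ∧ ¬ R B A := by
  have hbis : Bisim R := hGA.2.2.2.2.2
  constructor
  · intro hRAB
    rcases (hbis _ _ hRAB).1 V hτ with ⟨P', hw, _, hRPV⟩ | ⟨P'', P', hw, _, hτ', hRPV⟩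
    · exact (L1 hGA hAcc hw hV).1 hRPV
    · exact (L1 hGA hAcc (weakTau_tail hw hτ') hV).1 hRPV
  · intro hRBA
    rcases (hbis _ _ hRBA).2 V hτ with ⟨Q', hw, _, hRVQ⟩ | ⟨Q'', Q', hw, _, hτ', hRVQ⟩
    · exact (L1 hGA hAcc hw hV).2 hRVQ
    · exact (L1 hGA hAcc (weakTau_tail hw hτ') hV).2 hRVQ

/-- A divergence-closed state cannot be related to a state with a τ-step into
an inert state. -/
theorem notR_divclosed_caninert (hGA : GoodAbs R) {A B Zin : Term} (hA : DivClosed A) (hτ : Tau B Zin)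
    (hno : ∀ Z, ¬ Tau Zin Z) : ¬ R A B ∧ ¬ R B A := by
  have hbis : Bisim R := hGA.2.2.2.2.2
  have hAccZ : AccT Zin := accT_of_noTau hno
  constructor
  · intro hRAB
    rcases (hbis _ _ hRAB).1 Zin hτ with ⟨P', hw, _, hRPZ⟩ | ⟨P'', P', hw, _, hτ', hRPZ⟩
    · exact (L1 hGA hAccZ (weakTau_refl _) (hA P' hw)).2 hRPZ
    · exact (L1 hGA hAccZ (weakTau_refl _) (hA P' (weakTau_tail hw hτ'))).2 hRPZ
  · intro hRBA
    rcases (hbis _ _ hRBA).2 Zin hτ with ⟨Q', hw, _, hRZQ⟩ | ⟨Q'', Q', hw, _, hτ', hRZQ⟩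
    · exact (L1 hGA hAccZ (weakTau_refl _) (hA Q' hw)).1 hRZQ
    · exact (L1 hGA hAccZ (weakTau_refl _) (hA Q' (weakTau_tail hw hτ'))).1 hRZQ

end Refutations

/-! ### Section G4: the main negative result ¬(p = q) -/

abbrev U1 : Term := .par (.par (.par .nil (.par (Mb 4) Irep)) (MC 3)) .nil

theorem inOnly_U1 : InOnly U1 :=
  inOnly_par (inOnly_par (inOnly_par inOnly_nil
    (inOnly_par (inOnly_Mb (by decide)) inOnly_Irep)) (inOnly_MC (by decide))) inOnly_nil

theorem step_W0_inp_inv {a b : Name} {Z : Term} (h : Step W0 (.lab (.inp a b)) Z) :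
    Z = .par (.par .nil (.par (Mb b) Irep)) (MC 3) ∧ a = 1 := by
  cases h with
  | parR h => exact absurd h (step_MC_ne (by decide))
  | parL h =>
    cases h with
    | parR h =>
      obtain ⟨b', h1, h2⟩ := stepIrep_inv h
      subst h2
      injection h1 with h1'; injection h1' with ha hb
      subst ha; subst hb
      exact ⟨rfl, rfl⟩
    | parL h => exact absurd h step_nil

theorem E_W0D {Z : Term} (h : Tau (.par W0 O4) Z) : Z = U1 := by
  rcases tau_par_inv h with ⟨O', h1, _⟩ | ⟨W', h1, _⟩ |
    ⟨a, b, W', O', h1, h2, rfl⟩ | ⟨a, b, W', O', h1, h2, rfl⟩ |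
    ⟨a, c, W', O', h1, h2, rfl⟩ | ⟨a, c, W', O', h1, h2, rfl⟩
  · obtain ⟨i, c, _, h2, _⟩ := step_out_inv h1; simp at h2
  · exact absurd h1 (noTau_of_inOnly inOnly_W0)
  · obtain ⟨i, c, hms, h3, hO'⟩ := step_out_inv h2
    subst hO'
    have hc : c = 4 := by simpa using hms.symm
    subst hc
    injection h3 with h3'; injection h3' with ha hb
    subst ha; subst hb
    obtain ⟨hZ, _⟩ := step_W0_inp_inv h1
    rw [hZ]
  · obtain ⟨a', b', h3⟩ := inOnly_W0 h1; simp at h3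
  · obtain ⟨i, c', _, h3, _⟩ := step_out_inv h2; simp at h3
  · obtain ⟨a', b', h3⟩ := inOnly_W0 h1; simp at h3

theorem accT_W0D : AccT (.par W0 O4) :=
  accT_step (fun Z h => (E_W0D h) ▸ accT_of_inOnly inOnly_U1)

theorem tau_Y5D : Tau (.par Y5 O4) (FamN J5 0) :=
  Step.commL (Step.parR (stepCq 4)) (Step.out 0 rfl)

theorem tau_Y1_Y6 : Tau Y1 (Fam L6 0) :=
  Step.commR (Step.parR (Step.parL stepM3)) (stepCq 4)

section Specific

variable {R : PRel} (hGA : GoodAbs R)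

theorem notR_W0_Y5 (hGA : GoodAbs R) : ¬ R W0 Y5 ∧ ¬ R Y5 W0 := by
  have hO4 : R O4 O4 := hGA.2.1 O4 closed_O4
  have hD := notR_acc_candiv hGA accT_W0D tau_Y5D (run_FamN J5 0)
  constructor
  · intro h
    exact hD.1 (hGA.2.2.2.1.1 _ _ _ _ h hO4)
  · intro h
    exact hD.2 (hGA.2.2.2.1.1 _ _ _ _ h hO4)

theorem notR_W0_Y1 (hGA : GoodAbs R) : ¬ R W0 Y1 ∧ ¬ R Y1 W0 :=
  notR_acc_candiv hGA (accT_of_inOnly inOnly_W0) tau_Y1_Y6 (run_Fam L6 0)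

theorem notR_W0_Y6 (hGA : GoodAbs R) (m : ℕ) : ¬ R W0 (Fam L6 m) ∧ ¬ R (Fam L6 m) W0 :=
  notR_acc_run hGA (accT_of_inOnly inOnly_W0) (run_Fam L6 m)

theorem notR_PC_Y6 (hGA : GoodAbs R) (m : ℕ) :
    ¬ R (Fam L6 m) PC ∧ ¬ R PC (Fam L6 m) :=
  notR_divclosed_caninert hGA (divClosed_Fam inOnly_L6 m) tau_PC_Y2
    (fun _ => noTau_of_inOnly inOnly_Y2)

theorem notR_X0_QC (hGA : GoodAbs R) (n : ℕ) :
    ¬ R (Fam AX0 n) QC ∧ ¬ R QC (Fam AX0 n) :=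
  notR_divclosed_caninert hGA (divClosed_Fam inOnly_AX0 n) tau_QC_Y2
    (fun _ => noTau_of_inOnly inOnly_Y2)

theorem notR_X0_Y1 (hGA : GoodAbs R) (n : ℕ) :
    ¬ R (Fam AX0 n) Y1 ∧ ¬ R Y1 (Fam AX0 n) :=
  notR_divclosed_caninert hGA (divClosed_Fam inOnly_AX0 n) tau_Y1_Y5
    (fun _ => noTau_of_inOnly inOnly_Y5)

theorem notR_X0_inert (hGA : GoodAbs R) {Zin : Term} (hin : InOnly Zin) (n : ℕ) :
    ¬ R Zin (Fam AX0 n) ∧ ¬ R (Fam AX0 n) Zin :=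
  notR_acc_run hGA (accT_of_inOnly hin) (run_Fam AX0 n)

theorem notR_PC_Y1 (hGA : GoodAbs R) : ¬ R PC Y1 ∧ ¬ R Y1 PC := by
  have hbis : Bisim R := hGA.2.2.2.2.2
  have hW0 : ∀ Q', WeakTau Y1 Q' → ¬ R W0 Q' := by
    intro Q' hw
    rcases reach_Y1 hw with rfl | rfl | ⟨m, rfl⟩
    · exact (notR_W0_Y1 hGA).1
    · exact (notR_W0_Y5 hGA).1
    · exact (notR_W0_Y6 hGA m).1
  have hW0' : ∀ Q', WeakTau Y1 Q' → ¬ R Q' W0 := by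
    intro Q' hw
    rcases reach_Y1 hw with rfl | rfl | ⟨m, rfl⟩
    · exact (notR_W0_Y1 hGA).2
    · exact (notR_W0_Y5 hGA).2
    · exact (notR_W0_Y6 hGA m).2
  constructor
  · intro h
    rcases (hbis _ _ h).2 W0 tau_PC_W0 with ⟨Q', hw, _, hRWQ⟩ | ⟨Q'', Q', hw, _, hτ', hRWQ⟩
    · exact hW0 Q' hw hRWQ
    · exact hW0 Q' (weakTau_tail hw hτ') hRWQ
  · intro h
    rcases (hbis _ _ h).1 W0 tau_PC_W0 with ⟨P', hw, _, hRPW⟩ | ⟨P'', P', hw, _, hτ', hRPW⟩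
    · exact hW0' P' hw hRPW
    · exact hW0' P' (weakTau_tail hw hτ') hRPW

end Specific

theorem not_absEq_pT_qT : ¬ AbsEq pT qT := by
  rintro ⟨R, hGA, hR⟩
  have hbis : Bisim R := hGA.2.2.2.2.2
  have hRC : R Cq Cq := hGA.2.1 Cq closed_Cq
  have hPCQC : R PC QC := hGA.2.2.2.1.1 _ _ _ _ hR hRC
  have hX0 : ∀ Q', WeakTau QC Q' → R PC Q' → ¬ R (Fam AX0 0) Q' := by
    intro Q' hw hPCQ hXQ
    rcases reach_QC hw with rfl | rfl | rfl | rfl | rfl | rfl | ⟨m, rfl⟩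
    · exact (notR_X0_QC hGA 0).1 hXQ
    · exact (notR_X0_Y1 hGA 0).1 hXQ
    · exact (notR_X0_inert hGA inOnly_Y2 0).2 hXQ
    · exact (notR_X0_inert hGA inOnly_W0 0).2 hXQ
    · exact (notR_X0_inert hGA inOnly_Y4 0).2 hXQ
    · exact (notR_X0_inert hGA inOnly_Y5 0).2 hXQ
    · exact (notR_PC_Y6 hGA m).2 hPCQ
  rcases (hbis _ _ hPCQC).2 (Fam AX0 0) tau_PC_X0 with
    ⟨Q', hw, hRPCQ, hRXQ⟩ | ⟨Q'', Q', hw, hRPCQ, hτ', hRXQ⟩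
  · exact hX0 Q' hw hRPCQ hRXQ
  · -- Q'' reachable, then a further τ-step to Q'
    rcases reach_QC hw with rfl | rfl | rfl | rfl | rfl | rfl | ⟨m, rfl⟩
    · -- Q'' = QC
      rcases E_QC hτ' with rfl | rfl | rfl | rfl
      · exact (notR_X0_Y1 hGA 0).1 hRXQ
      · exact (notR_X0_inert hGA inOnly_Y2 0).2 hRXQ
      · exact (notR_X0_inert hGA inOnly_W0 0).2 hRXQ
      · exact (notR_X0_inert hGA inOnly_Y4 0).2 hRXQ
    · -- Q'' = Y1
      rcases E_Y1 hτ' with rfl | rfl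
      · exact (notR_X0_inert hGA inOnly_Y5 0).2 hRXQ
      · exact (notR_PC_Y1 hGA).1 hRPCQ
    · exact noTau_of_inOnly inOnly_Y2 hτ'
    · exact noTau_of_inOnly inOnly_W0 hτ'
    · exact noTau_of_inOnly inOnly_Y4 hτ'
    · exact noTau_of_inOnly inOnly_Y5 hτ'
    · exact (notR_PC_Y6 hGA m).2 hRPCQ

/-- the inclusions =ˢ ⊆ = ⊆ =ʷ hold and both are strict. -/
theorem strong_abs_weak_strict_inclusions :
    (∀ P Q : Term, StrongEq P Q → AbsEq P Q) ∧
    (∀ P Q : Term, AbsEq P Q → WeakEq P Q) ∧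
    (∃ P Q : Term, AbsEq P Q ∧ ¬ StrongEq P Q) ∧
    (∃ P Q : Term, WeakEq P Q ∧ ¬ AbsEq P Q) :=
  ⟨fun _ _ h => strongEq_to_absEq h,
   fun _ _ h => absEq_to_weakEq h,
   ⟨.nil, D0, absEq_nil_D0, not_strongEq_nil_D0⟩,
   ⟨pT, qT, weakEq_pT_qT, not_absEq_pT_qT⟩⟩
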